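/- arXiv:2404.09279 — 9 statements merged into one kernel-verified Lean document; each statement's English description precedes it below -/
import Mathlib

section
/- If (0,0) ∉ Q, then the optimal derivative function μ is strictly decreasing on [0,1]. -/
open Matrix Complex

/-- `Jf V U i j = ∑ₖ |(U* Vₖ U)ᵢⱼ|²`. -/
noncomputable def Jf {r : ℕ} (V : Fin r → Matrix (Fin 2) (Fin 2) ℂ)
    (U : Matrix (Fin 2) (Fin 2) ℂ) (i j : Fin 2) : ℝ :=
  ∑ k, ‖(Uᴴ * V k * U) i j‖ ^ 2

/-- The space of generators `Q`. -/
noncomputable def Qset {r : ℕ} (V : Fin r → Matrix (Fin 2) (Fin 2) ℂ) : Set (ℝ × ℝ) :=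
  {p | ∃ U ∈ Matrix.specialUnitaryGroup (Fin 2) ℂ,
    p = (Jf V U 0 1 - Jf V U 1 0, Jf V U 0 1 + Jf V U 1 0)}

/-- `lam` is stabilizable if some unitary makes the induced derivative vanish. -/
def Stabilizable {r : ℕ} (V : Fin r → Matrix (Fin 2) (Fin 2) ℂ) (lam : ℝ) : Prop :=
  ∃ U ∈ Matrix.specialUnitaryGroup (Fin 2) ℂ,
    Jf V U 0 1 - lam * (Jf V U 0 1 + Jf V U 1 0) = 0
theorem stmt_2 {r : ℕ} (V : Fin r → Matrix (Fin 2) (Fin 2) ℂ)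
    (μ : ℝ → ℝ)
    (hμ : ∀ lam ∈ Set.Icc (0:ℝ) 1,
      IsGreatest {y : ℝ | ∃ U ∈ Matrix.specialUnitaryGroup (Fin 2) ℂ,
        y = Jf V U 0 1 - lam * (Jf V U 0 1 + Jf V U 1 0)} (μ lam))
    (hQ : ((0:ℝ), (0:ℝ)) ∉ Qset V) :
    StrictAntiOn μ (Set.Icc (0:ℝ) 1) := by
  intro a ha b hb hab
  obtain ⟨hbmem, _⟩ := hμ b hb
  obtain ⟨U, hU, hUb⟩ := hbmem
  have h12 : 0 ≤ Jf V U 0 1 := Finset.sum_nonneg fun k _ => sq_nonneg _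
  have h21 : 0 ≤ Jf V U 1 0 := Finset.sum_nonneg fun k _ => sq_nonneg _
  have hS : 0 < Jf V U 0 1 + Jf V U 1 0 := by
    rcases lt_or_eq_of_le (by linarith : (0:ℝ) ≤ Jf V U 0 1 + Jf V U 1 0) with h | h
    · exact h
    · exfalso
      apply hQ
      have h1 : Jf V U 0 1 = 0 := by linarith
      have h2 : Jf V U 1 0 = 0 := by linarith
      exact ⟨U, hU, by simp [h1, h2]⟩
  have hμa : Jf V U 0 1 - a * (Jf V U 0 1 + Jf V U 1 0) ≤ μ a :=
    (hμ a ha).2 ⟨U, hU, rfl⟩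
  nlinarith [hS, hab]
end

section
/- If V is not normal (i.e. V V* ≠ V* V), then the set of stabilizable points λ ∈ [0,1] has maximum 1/(1+γ). If V is normal, then every λ ∈ [0,1] is stabilizable. -/
open Matrix Complex

section helpers
variable {U V : Matrix (Fin 2) (Fin 2) ℂ}

lemma conj_prod (hUU : U * Uᴴ = 1) (A B : Matrix (Fin 2) (Fin 2) ℂ) :
    (Uᴴ * A * U) * (Uᴴ * B * U) = Uᴴ * (A * B) * U := by
  rw [show (Uᴴ * A * U) * (Uᴴ * B * U) = Uᴴ * A * (U * Uᴴ) * (B * U) by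
    simp only [Matrix.mul_assoc], hUU, Matrix.mul_one]
  simp only [Matrix.mul_assoc]

lemma conj_cancel (hUU : U * Uᴴ = 1) (A : Matrix (Fin 2) (Fin 2) ℂ) :
    U * (Uᴴ * A * U) * Uᴴ = A := by
  rw [show U * (Uᴴ * A * U) * Uᴴ = (U * Uᴴ) * A * (U * Uᴴ) by simp only [Matrix.mul_assoc],
    hUU, Matrix.one_mul, Matrix.mul_one]

lemma conjT_eq : (Uᴴ * V * U)ᴴ = Uᴴ * Vᴴ * U := by
  rw [Matrix.conjTranspose_mul, Matrix.conjTranspose_mul, Matrix.conjTranspose_conjTranspose]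
  simp only [Matrix.mul_assoc]

lemma normal_iff2 (hUU : U * Uᴴ = 1) :
    (Uᴴ * V * U) * (Uᴴ * V * U)ᴴ = (Uᴴ * V * U)ᴴ * (Uᴴ * V * U) ↔ V * Vᴴ = Vᴴ * V := by
  rw [conjT_eq, conj_prod hUU, conj_prod hUU]
  constructor
  · intro h
    have := congrArg (fun M => U * M * Uᴴ) h
    simpa [conj_cancel hUU] using this
  · intro h; rw [h]
end helpers

lemma exists_eig (V : Matrix (Fin 2) (Fin 2) ℂ) :
    ∃ (μ : ℂ) (v : Fin 2 → ℂ), v ≠ 0 ∧ V.mulVec v = μ • v := by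
  obtain ⟨μ, hμ⟩ := Module.End.exists_eigenvalue (Matrix.mulVecLin V)
  obtain ⟨v, hv⟩ := hμ.exists_hasEigenvector
  exact ⟨μ, v, hv.2, hv.apply_eq_smul⟩

lemma schur2 (V : Matrix (Fin 2) (Fin 2) ℂ) :
    ∃ U ∈ Matrix.specialUnitaryGroup (Fin 2) ℂ, (Uᴴ * V * U) 1 0 = 0 := by
  obtain ⟨μ, v, hv, hev⟩ := exists_eig V
  have hnn : (0:ℝ) ≤ Complex.normSq (v 0) + Complex.normSq (v 1) :=
    add_nonneg (Complex.normSq_nonneg _) (Complex.normSq_nonneg _)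
  have hvv : Complex.normSq (v 0) + Complex.normSq (v 1) ≠ 0 := by
    intro h
    have h0 : Complex.normSq (v 0) = 0 := by nlinarith [Complex.normSq_nonneg (v 0), Complex.normSq_nonneg (v 1)]
    have h1 : Complex.normSq (v 1) = 0 := by nlinarith [Complex.normSq_nonneg (v 0), Complex.normSq_nonneg (v 1)]
    apply hv
    funext i
    fin_cases i
    · exact Complex.normSq_eq_zero.mp h0
    · exact Complex.normSq_eq_zero.mp h1
  set s : ℝ := Real.sqrt (Complex.normSq (v 0) + Complex.normSq (v 1)) with hs
  have hspos : 0 < s := Real.sqrt_pos.mpr (lt_of_le_of_ne hnn (Ne.symm hvv))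
  obtain ⟨sc, hscdef⟩ : ∃ sc : ℂ, sc = (s : ℂ) := ⟨_, rfl⟩
  have hsc : sc ≠ 0 := by
    rw [hscdef]
    exact_mod_cast ne_of_gt hspos
  have hs2 : sc ^ 2 = ((Complex.normSq (v 0) : ℂ)) + ((Complex.normSq (v 1) : ℂ)) := by
    rw [hscdef, show ((s:ℂ))^2 = ((s^2 : ℝ) : ℂ) by push_cast; ring, hs,
      Real.sq_sqrt hnn]
    push_cast
    ring
  have hconj : (starRingEnd ℂ) sc = sc := by rw [hscdef]; exact Complex.conj_ofReal _
  obtain ⟨a, ha⟩ : ∃ a : ℂ, a = v 0 / sc := ⟨_, rfl⟩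
  obtain ⟨b, hb⟩ : ∃ b : ℂ, b = v 1 / sc := ⟨_, rfl⟩
  have c0 : (starRingEnd ℂ) (v 0) * v 0 = ((Complex.normSq (v 0) : ℝ) : ℂ) := by
    rw [mul_comm]; exact Complex.mul_conj _
  have c1 : (starRingEnd ℂ) (v 1) * v 1 = ((Complex.normSq (v 1) : ℝ) : ℂ) := by
    rw [mul_comm]; exact Complex.mul_conj _
  have hab : (starRingEnd ℂ) a * a + (starRingEnd ℂ) b * b = 1 := by
    rw [ha, hb, map_div₀, map_div₀, hconj]
    field_simp
    rw [c0, c1]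
    linear_combination -hs2
  have h0 := congrFun hev 0
  have h1 := congrFun hev 1
  simp [Matrix.mulVec, dotProduct, Fin.sum_univ_two] at h0 h1
  refine ⟨!![a, -(starRingEnd ℂ) b; b, (starRingEnd ℂ) a], ?_, ?_⟩
  · rw [Matrix.mem_specialUnitaryGroup_iff]
    constructor
    · rw [Matrix.mem_unitaryGroup_iff']
      rw [Matrix.star_eq_conjTranspose]
      ext i j
      fin_cases i <;> fin_cases j <;>
        simp [Matrix.mul_apply, Fin.sum_univ_two, Matrix.conjTranspose_apply, Matrix.one_apply] <;>
        first | linear_combination hab | linear_combination -hab | ring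
    · rw [Matrix.det_fin_two]
      simp
      linear_combination hab
  · simp [Matrix.mul_apply, Fin.sum_univ_two, Matrix.conjTranspose_apply]
    rw [ha, hb]
    field_simp
    linear_combination (v 0) * h1 - (v 1) * h0

lemma diag_normal (M : Matrix (Fin 2) (Fin 2) ℂ) (h01 : M 0 1 = 0) (h10 : M 1 0 = 0) :
    M * Mᴴ = Mᴴ * M := by
  ext i j
  fin_cases i <;> fin_cases j <;>
    simp [Matrix.mul_apply, Fin.sum_univ_two, Matrix.conjTranspose_apply, h01, h10] <;>
    ring

lemma upper_entry_zero (M : Matrix (Fin 2) (Fin 2) ℂ) (hN : M * Mᴴ = Mᴴ * M)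
    (h10 : M 1 0 = 0) : M 0 1 = 0 := by
  have e := congrFun (congrFun hN 0) 0
  simp only [Matrix.mul_apply, Fin.sum_univ_two, Matrix.conjTranspose_apply, h10,
    map_zero, mul_zero, zero_mul, add_zero] at e
  have h2 : M 0 1 * star (M 0 1) = 0 := by linear_combination e
  rcases mul_eq_zero.mp h2 with h | h
  · exact h
  · simpa using congrArg star h

lemma Jf_formula (V : Matrix (Fin 2) (Fin 2) ℂ) (γ : ℝ) (hγ0 : 0 ≤ γ)
    (W : Fin 2 → Matrix (Fin 2) (Fin 2) ℂ)
    (hW0 : W 0 = V) (hW1 : W 1 = (Real.sqrt γ : ℂ) • Vᴴ)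
    (U : Matrix (Fin 2) (Fin 2) ℂ) (i j : Fin 2) :
    Jf W U i j = ‖(Uᴴ * V * U) i j‖ ^ 2
      + γ * ‖(Uᴴ * V * U) j i‖ ^ 2 := by
  have h2 : Uᴴ * W 1 * U = (Real.sqrt γ : ℂ) • ((Uᴴ * V * U)ᴴ) := by
    rw [hW1, conjT_eq, Matrix.mul_smul, Matrix.smul_mul]
  rw [Jf, Fin.sum_univ_two, hW0, h2]
  congr 1
  rw [Matrix.smul_apply, Matrix.conjTranspose_apply]
  rw [smul_eq_mul, norm_mul]
  simp only [Complex.norm_real, Real.norm_eq_abs, RCLike.star_def, Complex.norm_conj]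
  rw [_root_.abs_of_nonneg (Real.sqrt_nonneg γ), mul_pow, Real.sq_sqrt hγ0]

theorem stmt_6 (V : Matrix (Fin 2) (Fin 2) ℂ) (γ : ℝ) (hγ : γ ∈ Set.Icc (0:ℝ) 1)
    (W : Fin 2 → Matrix (Fin 2) (Fin 2) ℂ)
    (hW0 : W 0 = V) (hW1 : W 1 = (Real.sqrt γ : ℂ) • Vᴴ) :
    (¬ (V * Vᴴ = Vᴴ * V) →
      IsGreatest {lam ∈ Set.Icc (0:ℝ) 1 | Stabilizable W lam} (1 / (1 + γ))) ∧
    (V * Vᴴ = Vᴴ * V → ∀ lam ∈ Set.Icc (0:ℝ) 1, Stabilizable W lam) := by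
  obtain ⟨hγ0, hγ1⟩ := hγ
  have h1γ : (0:ℝ) < 1 + γ := by linarith
  obtain ⟨U, hUmem, hT10⟩ := schur2 V
  have hUU : U * Uᴴ = 1 := by
    have := Matrix.mem_unitaryGroup_iff.mp hUmem.1
    rwa [Matrix.star_eq_conjTranspose] at this
  have J01 := Jf_formula V γ hγ0 W hW0 hW1 U 0 1
  have J10 := Jf_formula V γ hγ0 W hW0 hW1 U 1 0
  rw [hT10] at J01 J10
  simp only [norm_zero, ne_eq, OfNat.ofNat_ne_zero, not_false_eq_true, zero_pow, mul_zero,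
    add_zero, zero_add] at J01 J10
  constructor
  · intro hnormal
    constructor
    · refine ⟨⟨by positivity, ?_⟩, U, hUmem, ?_⟩
      · rw [div_le_one h1γ]; linarith
      · rw [J01, J10]; field_simp; ring
    · rintro lam ⟨⟨hlam0, hlam1⟩, U', hU'mem, heq⟩
      have hU'U : U' * U'ᴴ = 1 := by
        have := Matrix.mem_unitaryGroup_iff.mp hU'mem.1
        rwa [Matrix.star_eq_conjTranspose] at this
      rw [Jf_formula V γ hγ0 W hW0 hW1 U' 0 1, Jf_formula V γ hγ0 W hW0 hW1 U' 1 0] at heq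
      obtain ⟨x, hx⟩ : ∃ x : ℝ, x = ‖(U'ᴴ * V * U') 0 1‖ ^ 2 := ⟨_, rfl⟩
      obtain ⟨y, hy⟩ : ∃ y : ℝ, y = ‖(U'ᴴ * V * U') 1 0‖ ^ 2 := ⟨_, rfl⟩
      rw [← hx, ← hy] at heq
      have hx0 : 0 ≤ x := hx ▸ sq_nonneg _
      have hy0 : 0 ≤ y := hy ▸ sq_nonneg _
      have hxy : 0 < x + y := by
        rcases lt_or_ge 0 (x + y) with h | h
        · exact h
        · exfalso
          have hx' : x = 0 := by linarith
          have hy' : y = 0 := by linarith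
          have e01 : (U'ᴴ * V * U') 0 1 = 0 := by
            have : ‖(U'ᴴ * V * U') 0 1‖ = 0 := by
              have := hx ▸ hx'
              nlinarith [norm_nonneg ((U'ᴴ * V * U') 0 1)]
            exact norm_eq_zero.mp this
          have e10 : (U'ᴴ * V * U') 1 0 = 0 := by
            have : ‖(U'ᴴ * V * U') 1 0‖ = 0 := by
              have := hy ▸ hy'
              nlinarith [norm_nonneg ((U'ᴴ * V * U') 1 0)]
            exact norm_eq_zero.mp this
          exact hnormal ((normal_iff2 hU'U).mp (diag_normal _ e01 e10))
      rw [le_div_iff₀ h1γ]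
      nlinarith [heq, mul_nonneg (sub_nonneg.mpr hγ1) hy0]
  · intro hnormal lam _
    have hT01 : (Uᴴ * V * U) 0 1 = 0 :=
      upper_entry_zero _ ((normal_iff2 hUU).mpr hnormal) hT10
    exact ⟨U, hUmem, by rw [J01, J10, hT01]; simp⟩
end

section
/- Assume r₁ > 0 and r₂ > 0, let x ∈ (0, 1/4), and set ξ = 1/(1 + (r₁/r₂)·tan(2πx)), which lies in (0,1). Then for every z ∈ ℝ: z is a maximizer of the function z̃ ↦ F(x, z̃) over ℝ if and only if z + φ₂/(2π) is a maximizer of the function ζ̃ ↦ G_φ(ξ, ζ̃) over ℝ. The same equivalence holds with 'maximizer' replaced by 'minimizer'. -/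
open Matrix Complex

theorem stmt_10 {r : ℕ} (V : Fin r → Matrix (Fin 2) (Fin 2) ℂ)
    (htr : ∀ k, (V k).trace = 0)
    (hdiag : (∑ k, (V k * (V k)ᴴ - (V k)ᴴ * V k)).IsDiag)
    (Sig δ r₁ φ₁ r₂ φ₂ φ : ℝ)
    (hSig : Sig = ∑ k, (‖V k 0 1‖ ^ 2 + ‖V k 1 0‖ ^ 2))
    (hδ : δ = ∑ k, (2 * ‖V k 0 0‖ ^ 2 -
      (‖V k 0 1‖ ^ 2 + ‖V k 1 0‖ ^ 2) / 2))
    (hr₁ : 0 < r₁) (hr₂ : 0 < r₂)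
    (hz₁ : (r₁ : ℂ) * Complex.exp (Complex.I * φ₁) =
      Complex.I * ∑ k, V k 0 1 * (starRingEnd ℂ) (V k 1 0))
    (hz₂ : (r₂ : ℂ) * Complex.exp (Complex.I * φ₂) =
      4 * ∑ k, (starRingEnd ℂ) (V k 0 0) * (V k 1 0))
    (hφ : φ = φ₁ - 2 * φ₂ + Real.pi / 2)
    (F : ℝ → ℝ → ℝ)
    (hF : ∀ x z, F x z = Sig
      + (δ + r₁ * Real.sin (4 * Real.pi * z + φ₁)) * Real.sin (2 * Real.pi * x) ^ 2
      - r₂ * Real.cos (2 * Real.pi * x) * Real.sin (2 * Real.pi * x)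
        * Real.sin (2 * Real.pi * z + φ₂))
    (G : ℝ → ℝ → ℝ)
    (hG : ∀ ξ ζ, G ξ ζ = (1 - ξ) * Real.sin (4 * Real.pi * ζ + φ - Real.pi / 2)
      - ξ * Real.sin (2 * Real.pi * ζ))
    (x : ℝ) (hx : x ∈ Set.Ioo (0:ℝ) (1/4))
    (ξ : ℝ) (hξdef : ξ = 1 / (1 + (r₁ / r₂) * Real.tan (2 * Real.pi * x))) :
    ξ ∈ Set.Ioo (0:ℝ) 1 ∧
    (∀ z : ℝ,
      ((∀ z' : ℝ, F x z' ≤ F x z) ↔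
        (∀ ζ' : ℝ, G ξ ζ' ≤ G ξ (z + φ₂ / (2 * Real.pi)))) ∧
      ((∀ z' : ℝ, F x z ≤ F x z') ↔
        (∀ ζ' : ℝ, G ξ (z + φ₂ / (2 * Real.pi)) ≤ G ξ ζ'))) := by
  obtain ⟨hx0, hx4⟩ := hx
  have hπ := Real.pi_pos
  set s := Real.sin (2 * Real.pi * x) with hs
  set c := Real.cos (2 * Real.pi * x) with hc
  have hsx : 0 < 2 * Real.pi * x := by positivity
  have hxπ : 2 * Real.pi * x < Real.pi / 2 := by nlinarith
  have hspos : 0 < s := Real.sin_pos_of_pos_of_lt_pi hsx (by nlinarith)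
  have hcpos : 0 < c := Real.cos_pos_of_mem_Ioo ⟨by linarith, hxπ⟩
  have htan : Real.tan (2 * Real.pi * x) = s / c := Real.tan_eq_sin_div_cos _
  set B := r₁ * s ^ 2 + r₂ * c * s with hB
  have hBpos : 0 < B := by positivity
  have hd : 1 + r₁ / r₂ * (s / c) = B / (r₂ * c * s) := by
    rw [hB]
    field_simp [hr₂.ne', hcpos.ne', hspos.ne']
    ring
  have hξ : ξ = r₂ * c * s / B := by
    rw [hξdef, htan, hd, one_div_div]
  have hξ0 : 0 < ξ := by rw [hξ]; positivity
  have hξ1 : ξ < 1 := by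
    rw [hξ, div_lt_one hBpos, hB]
    nlinarith [mul_pos hr₁ (pow_pos hspos 2)]
  have h1 : B * (1 - ξ) = r₁ * s ^ 2 := by
    rw [hξ]; field_simp [hBpos.ne']; rw [hB]; ring
  have h2 : B * ξ = r₂ * c * s := by
    rw [hξ]; field_simp [hBpos.ne']
  have key : ∀ z : ℝ, F x z = (Sig + δ * s ^ 2) + B * G ξ (z + φ₂ / (2 * Real.pi)) := by
    intro z
    have e1 : 4 * Real.pi * (z + φ₂ / (2 * Real.pi)) + φ - Real.pi / 2
        = 4 * Real.pi * z + φ₁ := by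
      rw [hφ]; field_simp; ring
    have e2 : 2 * Real.pi * (z + φ₂ / (2 * Real.pi)) = 2 * Real.pi * z + φ₂ := by
      field_simp
    rw [hF, hG, e1, e2, ← hs, ← hc]
    linear_combination (-Real.sin (4 * Real.pi * z + φ₁)) * h1 +
      Real.sin (2 * Real.pi * z + φ₂) * h2
  have main : ∀ a b : ℝ, F x a ≤ F x b ↔
      G ξ (a + φ₂ / (2 * Real.pi)) ≤ G ξ (b + φ₂ / (2 * Real.pi)) := by
    intro a b
    rw [key a, key b, add_le_add_iff_left, mul_le_mul_iff_right₀ hBpos]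
  refine ⟨⟨hξ0, hξ1⟩, fun z => ⟨⟨?_, ?_⟩, ⟨?_, ?_⟩⟩⟩
  · intro h ζ'
    have := (main (ζ' - φ₂ / (2 * Real.pi)) z).mp (h _)
    rwa [sub_add_cancel] at this
  · intro h z'
    exact (main z' z).mpr (h _)
  · intro h ζ'
    have := (main z (ζ' - φ₂ / (2 * Real.pi))).mp (h _)
    rwa [sub_add_cancel] at this
  · intro h z'
    exact (main z z').mpr (h _)
end

section
/- Assume r₁ > 0 and r₂ > 0, and set x̃ = (1/(2π))·arctan(r₂/(4r₁)). If φ ≡ 0 (mod 2π), then for every x ∈ [0, 1/4]: (a) max_{z ∈ ℝ} F(x,z) = Σ + δ·sin²(2πx) + sin(2πx)·(r₁ sin(2πx) + r₂ cos(2πx)); (b) for x ∈ [0, x̃], min_{z ∈ ℝ} F(x,z) = Σ + δ·sin²(2πx) + sin(2πx)·(r₁ sin(2πx) − r₂ cos(2πx)), while for x ∈ [x̃, 1/4], min_{z ∈ ℝ} F(x,z) = Σ + (δ − r₁)·sin²(2πx) − (r₂²/(8r₁))·cos²(2πx). If φ ≡ π (mod 2π), then for every x ∈ [0, 1/4]: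 (c) min_{z ∈ ℝ} F(x,z) = Σ + δ·sin²(2πx) − sin(2πx)·(r₁ sin(2πx) + r₂ cos(2πx)); (d) for x ∈ [0, x̃], max_{z ∈ ℝ} F(x,z) = Σ + δ·sin²(2πx) + sin(2πx)·(−r₁ sin(2πx) + r₂ cos(2πx)), while for x ∈ [x̃, 1/4], max_{z ∈ ℝ} F(x,z) = Σ + (δ + r₁)·sin²(2πx) + (r₂²/(8r₁))·cos²(2πx). (All maxima and minima are attained, since F(x,·) is continuous and 1-periodic.) -/
open Matrix Complex

section helpers

private lemma range_aux (φ₂ : ℝ) (f : ℝ → ℝ) (g : ℝ → ℝ)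
    (h : ∀ z, f z = g (Real.sin (2 * Real.pi * z + φ₂))) :
    Set.range f = g '' Set.Icc (-1 : ℝ) 1 := by
  ext y
  constructor
  · rintro ⟨z, rfl⟩
    exact ⟨_, ⟨Real.neg_one_le_sin _, Real.sin_le_one _⟩, (h z).symm⟩
  · rintro ⟨t, ht, rfl⟩
    refine ⟨(Real.arcsin t - φ₂) / (2 * Real.pi), ?_⟩
    rw [h]
    have hπ : (2 * Real.pi) ≠ 0 := by positivity
    have h2 : 2 * Real.pi * ((Real.arcsin t - φ₂) / (2 * Real.pi)) + φ₂ = Real.arcsin t := by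
      field_simp
      ring
    rw [h2, Real.sin_arcsin ht.1 ht.2]

private lemma quadMax (C a b : ℝ) (ha : 0 ≤ a) (hb : 0 ≤ b) :
    IsGreatest ((fun t => C + a * t ^ 2 - b * t) '' Set.Icc (-1 : ℝ) 1) (C + a + b) := by
  constructor
  · exact ⟨-1, by norm_num, by ring⟩
  · rintro y ⟨t, ⟨h1, h2⟩, rfl⟩
    have k1 : 0 ≤ a * ((1 - t) * (1 + t)) :=
      mul_nonneg ha (mul_nonneg (by linarith) (by linarith))
    have k2 : 0 ≤ b * (1 + t) := mul_nonneg hb (by linarith)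
    simp only
    nlinarith

private lemma quadMinEdge (C a b : ℝ) (ha : 0 ≤ a) (hab : 2 * a ≤ b) :
    IsLeast ((fun t => C + a * t ^ 2 - b * t) '' Set.Icc (-1 : ℝ) 1) (C + a - b) := by
  constructor
  · exact ⟨1, by norm_num, by ring⟩
  · rintro y ⟨t, ⟨h1, h2⟩, rfl⟩
    have k0 : 0 ≤ a * (1 - t) := mul_nonneg ha (by linarith)
    have k1 : 0 ≤ (1 - t) * (b - a * (1 + t)) :=
      mul_nonneg (by linarith) (by nlinarith)
    simp only
    nlinarith

private lemma quadMinVertex (C a b : ℝ) (ha : 0 < a) (hb : 0 ≤ b) (hab : b ≤ 2 * a) :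
    IsLeast ((fun t => C + a * t ^ 2 - b * t) '' Set.Icc (-1 : ℝ) 1) (C - b ^ 2 / (4 * a)) := by
  constructor
  · refine ⟨b / (2 * a), ⟨?_, ?_⟩, ?_⟩
    · have : 0 ≤ b / (2 * a) := by positivity
      linarith
    · rw [div_le_one (by linarith)]; linarith
    · have hane : a ≠ 0 := ha.ne'
      field_simp
      ring
  · rintro y ⟨t, ⟨h1, h2⟩, rfl⟩
    have hident : C + a * t ^ 2 - b * t - (C - b ^ 2 / (4 * a))
        = (2 * a * t - b) ^ 2 / (4 * a) := by
      field_simp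
      ring
    have hnn : 0 ≤ (2 * a * t - b) ^ 2 / (4 * a) :=
      div_nonneg (sq_nonneg _) (by linarith)
    simp only
    linarith [hident ▸ hnn]

private lemma quadMin2 (C a b : ℝ) (ha : 0 ≤ a) (hb : 0 ≤ b) :
    IsLeast ((fun t => C - a * t ^ 2 - b * t) '' Set.Icc (-1 : ℝ) 1) (C - a - b) := by
  constructor
  · exact ⟨1, by norm_num, by ring⟩
  · rintro y ⟨t, ⟨h1, h2⟩, rfl⟩
    have k1 : 0 ≤ a * ((1 - t) * (1 + t)) :=
      mul_nonneg ha (mul_nonneg (by linarith) (by linarith))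
    have k2 : 0 ≤ b * (1 - t) := mul_nonneg hb (by linarith)
    simp only
    nlinarith

private lemma quadMax2Edge (C a b : ℝ) (ha : 0 ≤ a) (hab : 2 * a ≤ b) :
    IsGreatest ((fun t => C - a * t ^ 2 - b * t) '' Set.Icc (-1 : ℝ) 1) (C - a + b) := by
  constructor
  · exact ⟨-1, by norm_num, by ring⟩
  · rintro y ⟨t, ⟨h1, h2⟩, rfl⟩
    have k0 : 0 ≤ a * (1 - t) := mul_nonneg ha (by linarith)
    have k1 : 0 ≤ (1 + t) * (b - a * (1 - t)) :=
      mul_nonneg (by linarith) (by nlinarith)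
    simp only
    nlinarith

private lemma quadMax2Vertex (C a b : ℝ) (ha : 0 < a) (hb : 0 ≤ b) (hab : b ≤ 2 * a) :
    IsGreatest ((fun t => C - a * t ^ 2 - b * t) '' Set.Icc (-1 : ℝ) 1)
      (C + b ^ 2 / (4 * a)) := by
  constructor
  · refine ⟨-(b / (2 * a)), ⟨?_, ?_⟩, ?_⟩
    · rw [neg_le, neg_neg, div_le_one (by linarith)]; linarith
    · have : 0 ≤ b / (2 * a) := by positivity
      linarith
    · have hane : a ≠ 0 := ha.ne'
      field_simp
      ring
  · rintro y ⟨t, ⟨h1, h2⟩, rfl⟩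
    have hident : C + b ^ 2 / (4 * a) - (C - a * t ^ 2 - b * t)
        = (2 * a * t + b) ^ 2 / (4 * a) := by
      field_simp
      ring
    have hnn : 0 ≤ (2 * a * t + b) ^ 2 / (4 * a) :=
      div_nonneg (sq_nonneg _) (by linarith)
    simp only
    linarith [hident ▸ hnn]

private lemma ineq_le (r₁ r₂ θ : ℝ) (hr₁ : 0 < r₁) (hr₂ : 0 < r₂) (hθ0 : 0 ≤ θ)
    (hθ : θ ≤ Real.arctan (r₂ / (4 * r₁))) :
    4 * r₁ * Real.sin θ ≤ r₂ * Real.cos θ := by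
  have hA : Real.arctan (r₂ / (4 * r₁)) < Real.pi / 2 := Real.arctan_lt_pi_div_two _
  have hD : (0:ℝ) < Real.sqrt (1 + (r₂ / (4 * r₁)) ^ 2) := Real.sqrt_pos.2 (by positivity)
  have h1 : 0 ≤ Real.sin (Real.arctan (r₂ / (4 * r₁)) - θ) :=
    Real.sin_nonneg_of_nonneg_of_le_pi (by linarith) (by nlinarith [Real.pi_pos])
  rw [Real.sin_sub, Real.sin_arctan, Real.cos_arctan] at h1
  have h3 : r₂ / (4 * r₁) / Real.sqrt (1 + (r₂ / (4 * r₁)) ^ 2) * Real.cos θ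
      - 1 / Real.sqrt (1 + (r₂ / (4 * r₁)) ^ 2) * Real.sin θ
      = (r₂ / (4 * r₁) * Real.cos θ - Real.sin θ) / Real.sqrt (1 + (r₂ / (4 * r₁)) ^ 2) := by
    ring
  rw [h3, le_div_iff₀ hD, zero_mul] at h1
  rw [sub_nonneg, div_mul_eq_mul_div, le_div_iff₀ (by linarith : (0:ℝ) < 4 * r₁)] at h1
  linarith

private lemma ineq_ge (r₁ r₂ θ : ℝ) (hr₁ : 0 < r₁) (hr₂ : 0 < r₂)
    (hθ : Real.arctan (r₂ / (4 * r₁)) ≤ θ) (hθ2 : θ ≤ Real.pi / 2) :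
    r₂ * Real.cos θ ≤ 4 * r₁ * Real.sin θ := by
  have hA : 0 < Real.arctan (r₂ / (4 * r₁)) := by
    have := Real.arctan_strictMono (show (0:ℝ) < r₂ / (4 * r₁) by positivity)
    simpa [Real.arctan_zero] using this
  have hD : (0:ℝ) < Real.sqrt (1 + (r₂ / (4 * r₁)) ^ 2) := Real.sqrt_pos.2 (by positivity)
  have h1 : 0 ≤ Real.sin (θ - Real.arctan (r₂ / (4 * r₁))) :=
    Real.sin_nonneg_of_nonneg_of_le_pi (by linarith) (by nlinarith [Real.pi_pos])
  rw [Real.sin_sub, Real.sin_arctan, Real.cos_arctan] at h1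
  have h3 : Real.sin θ * (1 / Real.sqrt (1 + (r₂ / (4 * r₁)) ^ 2))
      - Real.cos θ * (r₂ / (4 * r₁) / Real.sqrt (1 + (r₂ / (4 * r₁)) ^ 2))
      = (Real.sin θ - r₂ / (4 * r₁) * Real.cos θ) / Real.sqrt (1 + (r₂ / (4 * r₁)) ^ 2) := by
    ring
  rw [h3, le_div_iff₀ hD, zero_mul, sub_nonneg, div_mul_eq_mul_div,
    div_le_iff₀ (by linarith : (0:ℝ) < 4 * r₁)] at h1
  linarith

end helpers


set_option maxHeartbeats 2000000 in
theorem stmt_11 {r : ℕ} (V : Fin r → Matrix (Fin 2) (Fin 2) ℂ)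
    (htr : ∀ k, (V k).trace = 0)
    (hdiag : (∑ k, (V k * (V k)ᴴ - (V k)ᴴ * V k)).IsDiag)
    (Sig δ r₁ φ₁ r₂ φ₂ φ : ℝ)
    (hSig : Sig = ∑ k, (‖V k 0 1‖ ^ 2 + ‖V k 1 0‖ ^ 2))
    (hδ : δ = ∑ k, (2 * ‖V k 0 0‖ ^ 2 -
      (‖V k 0 1‖ ^ 2 + ‖V k 1 0‖ ^ 2) / 2))
    (hr₁ : 0 < r₁) (hr₂ : 0 < r₂)
    (hz₁ : (r₁ : ℂ) * Complex.exp (Complex.I * φ₁) =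
      Complex.I * ∑ k, V k 0 1 * (starRingEnd ℂ) (V k 1 0))
    (hz₂ : (r₂ : ℂ) * Complex.exp (Complex.I * φ₂) =
      4 * ∑ k, (starRingEnd ℂ) (V k 0 0) * (V k 1 0))
    (hφ : φ = φ₁ - 2 * φ₂ + Real.pi / 2)
    (F : ℝ → ℝ → ℝ)
    (hF : ∀ x z, F x z = Sig
      + (δ + r₁ * Real.sin (4 * Real.pi * z + φ₁)) * Real.sin (2 * Real.pi * x) ^ 2
      - r₂ * Real.cos (2 * Real.pi * x) * Real.sin (2 * Real.pi * x)
        * Real.sin (2 * Real.pi * z + φ₂))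
    (xt : ℝ) (hxt : xt = (1 / (2 * Real.pi)) * Real.arctan (r₂ / (4 * r₁))) :
    ((∃ n : ℤ, φ = 2 * Real.pi * n) →
      (∀ x ∈ Set.Icc (0:ℝ) (1/4),
        IsGreatest (Set.range (F x))
          (Sig + δ * Real.sin (2 * Real.pi * x) ^ 2 + Real.sin (2 * Real.pi * x)
            * (r₁ * Real.sin (2 * Real.pi * x) + r₂ * Real.cos (2 * Real.pi * x)))) ∧
      (∀ x ∈ Set.Icc (0:ℝ) xt,
        IsLeast (Set.range (F x))
          (Sig + δ * Real.sin (2 * Real.pi * x) ^ 2 + Real.sin (2 * Real.pi * x)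
            * (r₁ * Real.sin (2 * Real.pi * x) - r₂ * Real.cos (2 * Real.pi * x)))) ∧
      (∀ x ∈ Set.Icc xt (1/4 : ℝ),
        IsLeast (Set.range (F x))
          (Sig + (δ - r₁) * Real.sin (2 * Real.pi * x) ^ 2
            - (r₂ ^ 2 / (8 * r₁)) * Real.cos (2 * Real.pi * x) ^ 2))) ∧
    ((∃ n : ℤ, φ = Real.pi + 2 * Real.pi * n) →
      (∀ x ∈ Set.Icc (0:ℝ) (1/4),
        IsLeast (Set.range (F x))
          (Sig + δ * Real.sin (2 * Real.pi * x) ^ 2 - Real.sin (2 * Real.pi * x)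
            * (r₁ * Real.sin (2 * Real.pi * x) + r₂ * Real.cos (2 * Real.pi * x)))) ∧
      (∀ x ∈ Set.Icc (0:ℝ) xt,
        IsGreatest (Set.range (F x))
          (Sig + δ * Real.sin (2 * Real.pi * x) ^ 2 + Real.sin (2 * Real.pi * x)
            * (-(r₁ * Real.sin (2 * Real.pi * x)) + r₂ * Real.cos (2 * Real.pi * x)))) ∧
      (∀ x ∈ Set.Icc xt (1/4 : ℝ),
        IsGreatest (Set.range (F x))
          (Sig + (δ + r₁) * Real.sin (2 * Real.pi * x) ^ 2
            + (r₂ ^ 2 / (8 * r₁)) * Real.cos (2 * Real.pi * x) ^ 2))) := by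

  have hπ := Real.pi_pos
  have hA2 : Real.arctan (r₂ / (4 * r₁)) < Real.pi / 2 := Real.arctan_lt_pi_div_two _
  have hA0 : 0 < Real.arctan (r₂ / (4 * r₁)) := by
    have := Real.arctan_strictMono (show (0:ℝ) < r₂ / (4 * r₁) by positivity)
    simpa [Real.arctan_zero] using this
  have hxtA : 2 * Real.pi * xt = Real.arctan (r₂ / (4 * r₁)) := by
    rw [hxt]; field_simp
  constructor
  · rintro ⟨n, hn⟩
    rw [hφ] at hn
    have hsin : ∀ z : ℝ, Real.sin (4 * Real.pi * z + φ₁)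
        = 2 * Real.sin (2 * Real.pi * z + φ₂) ^ 2 - 1 := by
      intro z
      have e : 4 * Real.pi * z + φ₁
          = (2 * (2 * Real.pi * z + φ₂) - Real.pi / 2) + (n : ℝ) * (2 * Real.pi) := by
        linarith
      rw [e, Real.sin_add_int_mul_two_pi, Real.sin_sub_pi_div_two, Real.cos_two_mul]
      nlinarith [Real.sin_sq_add_cos_sq (2 * Real.pi * z + φ₂)]
    have hrange : ∀ x : ℝ, Set.range (F x)
        = (fun t => (Sig + (δ - r₁) * Real.sin (2 * Real.pi * x) ^ 2)
            + (2 * r₁ * Real.sin (2 * Real.pi * x) ^ 2) * t ^ 2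
            - (r₂ * Real.cos (2 * Real.pi * x) * Real.sin (2 * Real.pi * x)) * t)
          '' Set.Icc (-1 : ℝ) 1 := fun x =>
      range_aux φ₂ _ _ (fun z => by rw [hF, hsin z]; ring)
    refine ⟨?_, ?_, ?_⟩
    · rintro x ⟨hx0, hx1⟩
      have hθ0 : 0 ≤ 2 * Real.pi * x := mul_nonneg (by positivity) hx0
      have hθ2 : 2 * Real.pi * x ≤ Real.pi / 2 := by nlinarith
      have hs : 0 ≤ Real.sin (2 * Real.pi * x) :=
        Real.sin_nonneg_of_nonneg_of_le_pi hθ0 (by linarith)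
      have hc : 0 ≤ Real.cos (2 * Real.pi * x) :=
        Real.cos_nonneg_of_mem_Icc ⟨by linarith, hθ2⟩
      rw [hrange x]
      have hval : Sig + δ * Real.sin (2 * Real.pi * x) ^ 2 + Real.sin (2 * Real.pi * x)
            * (r₁ * Real.sin (2 * Real.pi * x) + r₂ * Real.cos (2 * Real.pi * x))
          = (Sig + (δ - r₁) * Real.sin (2 * Real.pi * x) ^ 2)
            + 2 * r₁ * Real.sin (2 * Real.pi * x) ^ 2
            + r₂ * Real.cos (2 * Real.pi * x) * Real.sin (2 * Real.pi * x) := by ring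
      rw [hval]
      exact quadMax _ _ _ (by positivity) (mul_nonneg (mul_nonneg hr₂.le hc) hs)
    · rintro x ⟨hx0, hx1⟩
      have hθ0 : 0 ≤ 2 * Real.pi * x := mul_nonneg (by positivity) hx0
      have hθA : 2 * Real.pi * x ≤ Real.arctan (r₂ / (4 * r₁)) := by
        have := mul_le_mul_of_nonneg_left hx1 (show (0:ℝ) ≤ 2 * Real.pi by positivity)
        linarith [hxtA]
      have hθ2 : 2 * Real.pi * x ≤ Real.pi / 2 := by linarith
      have hs : 0 ≤ Real.sin (2 * Real.pi * x) :=
        Real.sin_nonneg_of_nonneg_of_le_pi hθ0 (by linarith)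
      have hc : 0 ≤ Real.cos (2 * Real.pi * x) :=
        Real.cos_nonneg_of_mem_Icc ⟨by linarith, hθ2⟩
      have hkey : 4 * r₁ * Real.sin (2 * Real.pi * x) ≤ r₂ * Real.cos (2 * Real.pi * x) :=
        ineq_le r₁ r₂ _ hr₁ hr₂ hθ0 hθA
      rw [hrange x]
      have hval : Sig + δ * Real.sin (2 * Real.pi * x) ^ 2 + Real.sin (2 * Real.pi * x)
            * (r₁ * Real.sin (2 * Real.pi * x) - r₂ * Real.cos (2 * Real.pi * x))
          = (Sig + (δ - r₁) * Real.sin (2 * Real.pi * x) ^ 2)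
            + 2 * r₁ * Real.sin (2 * Real.pi * x) ^ 2
            - r₂ * Real.cos (2 * Real.pi * x) * Real.sin (2 * Real.pi * x) := by ring
      rw [hval]
      exact quadMinEdge _ _ _ (by positivity)
        (by nlinarith [mul_le_mul_of_nonneg_right hkey hs])
    · rintro x ⟨hx0, hx1⟩
      have hθA : Real.arctan (r₂ / (4 * r₁)) ≤ 2 * Real.pi * x := by
        have := mul_le_mul_of_nonneg_left hx0 (show (0:ℝ) ≤ 2 * Real.pi by positivity)
        linarith [hxtA]
      have hθ2 : 2 * Real.pi * x ≤ Real.pi / 2 := by nlinarith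
      have hspos : 0 < Real.sin (2 * Real.pi * x) :=
        Real.sin_pos_of_pos_of_lt_pi (by linarith) (by linarith)
      have hc : 0 ≤ Real.cos (2 * Real.pi * x) :=
        Real.cos_nonneg_of_mem_Icc ⟨by linarith, hθ2⟩
      have hkey : r₂ * Real.cos (2 * Real.pi * x) ≤ 4 * r₁ * Real.sin (2 * Real.pi * x) :=
        ineq_ge r₁ r₂ _ hr₁ hr₂ hθA hθ2
      rw [hrange x]
      have hsne : Real.sin (2 * Real.pi * x) ≠ 0 := hspos.ne'
      have hr₁ne : r₁ ≠ 0 := hr₁.ne'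
      have h2 : (r₂ * Real.cos (2 * Real.pi * x) * Real.sin (2 * Real.pi * x)) ^ 2
            / (4 * (2 * r₁ * Real.sin (2 * Real.pi * x) ^ 2))
          = r₂ ^ 2 / (8 * r₁) * Real.cos (2 * Real.pi * x) ^ 2 := by
        field_simp
        ring
      have hval : Sig + (δ - r₁) * Real.sin (2 * Real.pi * x) ^ 2
            - r₂ ^ 2 / (8 * r₁) * Real.cos (2 * Real.pi * x) ^ 2
          = (Sig + (δ - r₁) * Real.sin (2 * Real.pi * x) ^ 2)
            - (r₂ * Real.cos (2 * Real.pi * x) * Real.sin (2 * Real.pi * x)) ^ 2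
              / (4 * (2 * r₁ * Real.sin (2 * Real.pi * x) ^ 2)) := by
        rw [h2]
      rw [hval]
      exact quadMinVertex _ _ _
        (mul_pos (by linarith) (pow_pos hspos 2))
        (mul_nonneg (mul_nonneg hr₂.le hc) hspos.le)
        (by nlinarith [mul_le_mul_of_nonneg_right hkey hspos.le])
  · rintro ⟨n, hn⟩
    rw [hφ] at hn
    have hsin : ∀ z : ℝ, Real.sin (4 * Real.pi * z + φ₁)
        = 1 - 2 * Real.sin (2 * Real.pi * z + φ₂) ^ 2 := by
      intro z
      have e : 4 * Real.pi * z + φ₁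
          = (2 * (2 * Real.pi * z + φ₂) + Real.pi / 2) + (n : ℝ) * (2 * Real.pi) := by
        linarith
      rw [e, Real.sin_add_int_mul_two_pi, Real.sin_add_pi_div_two, Real.cos_two_mul]
      nlinarith [Real.sin_sq_add_cos_sq (2 * Real.pi * z + φ₂)]
    have hrange : ∀ x : ℝ, Set.range (F x)
        = (fun t => (Sig + (δ + r₁) * Real.sin (2 * Real.pi * x) ^ 2)
            - (2 * r₁ * Real.sin (2 * Real.pi * x) ^ 2) * t ^ 2
            - (r₂ * Real.cos (2 * Real.pi * x) * Real.sin (2 * Real.pi * x)) * t)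
          '' Set.Icc (-1 : ℝ) 1 := fun x =>
      range_aux φ₂ _ _ (fun z => by rw [hF, hsin z]; ring)
    refine ⟨?_, ?_, ?_⟩
    · rintro x ⟨hx0, hx1⟩
      have hθ0 : 0 ≤ 2 * Real.pi * x := mul_nonneg (by positivity) hx0
      have hθ2 : 2 * Real.pi * x ≤ Real.pi / 2 := by nlinarith
      have hs : 0 ≤ Real.sin (2 * Real.pi * x) :=
        Real.sin_nonneg_of_nonneg_of_le_pi hθ0 (by linarith)
      have hc : 0 ≤ Real.cos (2 * Real.pi * x) :=
        Real.cos_nonneg_of_mem_Icc ⟨by linarith, hθ2⟩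
      rw [hrange x]
      have hval : Sig + δ * Real.sin (2 * Real.pi * x) ^ 2 - Real.sin (2 * Real.pi * x)
            * (r₁ * Real.sin (2 * Real.pi * x) + r₂ * Real.cos (2 * Real.pi * x))
          = (Sig + (δ + r₁) * Real.sin (2 * Real.pi * x) ^ 2)
            - 2 * r₁ * Real.sin (2 * Real.pi * x) ^ 2
            - r₂ * Real.cos (2 * Real.pi * x) * Real.sin (2 * Real.pi * x) := by ring
      rw [hval]
      exact quadMin2 _ _ _ (by positivity) (mul_nonneg (mul_nonneg hr₂.le hc) hs)
    · rintro x ⟨hx0, hx1⟩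
      have hθ0 : 0 ≤ 2 * Real.pi * x := mul_nonneg (by positivity) hx0
      have hθA : 2 * Real.pi * x ≤ Real.arctan (r₂ / (4 * r₁)) := by
        have := mul_le_mul_of_nonneg_left hx1 (show (0:ℝ) ≤ 2 * Real.pi by positivity)
        linarith [hxtA]
      have hθ2 : 2 * Real.pi * x ≤ Real.pi / 2 := by linarith
      have hs : 0 ≤ Real.sin (2 * Real.pi * x) :=
        Real.sin_nonneg_of_nonneg_of_le_pi hθ0 (by linarith)
      have hc : 0 ≤ Real.cos (2 * Real.pi * x) :=
        Real.cos_nonneg_of_mem_Icc ⟨by linarith, hθ2⟩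
      have hkey : 4 * r₁ * Real.sin (2 * Real.pi * x) ≤ r₂ * Real.cos (2 * Real.pi * x) :=
        ineq_le r₁ r₂ _ hr₁ hr₂ hθ0 hθA
      rw [hrange x]
      have hval : Sig + δ * Real.sin (2 * Real.pi * x) ^ 2 + Real.sin (2 * Real.pi * x)
            * (-(r₁ * Real.sin (2 * Real.pi * x)) + r₂ * Real.cos (2 * Real.pi * x))
          = (Sig + (δ + r₁) * Real.sin (2 * Real.pi * x) ^ 2)
            - 2 * r₁ * Real.sin (2 * Real.pi * x) ^ 2
            + r₂ * Real.cos (2 * Real.pi * x) * Real.sin (2 * Real.pi * x) := by ring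
      rw [hval]
      exact quadMax2Edge _ _ _ (by positivity)
        (by nlinarith [mul_le_mul_of_nonneg_right hkey hs])
    · rintro x ⟨hx0, hx1⟩
      have hθA : Real.arctan (r₂ / (4 * r₁)) ≤ 2 * Real.pi * x := by
        have := mul_le_mul_of_nonneg_left hx0 (show (0:ℝ) ≤ 2 * Real.pi by positivity)
        linarith [hxtA]
      have hθ2 : 2 * Real.pi * x ≤ Real.pi / 2 := by nlinarith
      have hspos : 0 < Real.sin (2 * Real.pi * x) :=
        Real.sin_pos_of_pos_of_lt_pi (by linarith) (by linarith)
      have hc : 0 ≤ Real.cos (2 * Real.pi * x) :=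
        Real.cos_nonneg_of_mem_Icc ⟨by linarith, hθ2⟩
      have hkey : r₂ * Real.cos (2 * Real.pi * x) ≤ 4 * r₁ * Real.sin (2 * Real.pi * x) :=
        ineq_ge r₁ r₂ _ hr₁ hr₂ hθA hθ2
      rw [hrange x]
      have hsne : Real.sin (2 * Real.pi * x) ≠ 0 := hspos.ne'
      have hr₁ne : r₁ ≠ 0 := hr₁.ne'
      have h2 : (r₂ * Real.cos (2 * Real.pi * x) * Real.sin (2 * Real.pi * x)) ^ 2
            / (4 * (2 * r₁ * Real.sin (2 * Real.pi * x) ^ 2))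
          = r₂ ^ 2 / (8 * r₁) * Real.cos (2 * Real.pi * x) ^ 2 := by
        field_simp
        ring
      have hval : Sig + (δ + r₁) * Real.sin (2 * Real.pi * x) ^ 2
            + r₂ ^ 2 / (8 * r₁) * Real.cos (2 * Real.pi * x) ^ 2
          = (Sig + (δ + r₁) * Real.sin (2 * Real.pi * x) ^ 2)
            + (r₂ * Real.cos (2 * Real.pi * x) * Real.sin (2 * Real.pi * x)) ^ 2
              / (4 * (2 * r₁ * Real.sin (2 * Real.pi * x) ^ 2)) := by
        rw [h2]
      rw [hval]
      exact quadMax2Vertex _ _ _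
        (mul_pos (by linarith) (pow_pos hspos 2))
        (mul_nonneg (mul_nonneg hr₂.le hc) hspos.le)
        (by nlinarith [mul_le_mul_of_nonneg_right hkey hspos.le])
end

section
/- If there exists a nonzero vector ψ ∈ ℂ² that is an eigenvector of every V_k (k = 1, …, r), then either ∑_{k=1}^r conj(v_k)·w_k = 0 or ∑_{k=1}^r conj(u_k)·w_k is a real number. (In the paper's terminology: a coolable system is either degenerate or odd.) -/
open Matrix Complex

lemma cs_aux {r : ℕ} (u w : Fin r → ℂ) :
    Complex.normSq (∑ k, (starRingEnd ℂ) (u k) * w k) ≤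
      (∑ k, Complex.normSq (u k)) * (∑ k, Complex.normSq (w k)) := by
  have h := norm_inner_le_norm (𝕜 := ℂ)
    (x := (WithLp.equiv 2 (Fin r → ℂ)).symm u) (y := (WithLp.equiv 2 (Fin r → ℂ)).symm w)
  rw [EuclideanSpace.norm_eq, EuclideanSpace.norm_eq] at h
  simp only [PiLp.inner_apply, RCLike.inner_apply, WithLp.equiv_symm_apply, PiLp.toLp_apply] at h
  have h2 := pow_le_pow_left₀ (norm_nonneg _) h 2
  rw [mul_pow, Real.sq_sqrt (by positivity), Real.sq_sqrt (by positivity)] at h2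
  simp only [Complex.sq_norm] at h2
  simpa only [mul_comm] using h2

set_option maxHeartbeats 1000000 in
lemma key {r : ℕ} (u v w : Fin r → ℂ) (a b : ℂ)
    (hE : ∑ k, u k * (starRingEnd ℂ) (w k) = ∑ k, (starRingEnd ℂ) (u k) * v k)
    (hS : ∃ c : ℝ, 0 ≤ c ∧ ∑ k, (starRingEnd ℂ) (v k) * w k = (c : ℂ))
    (hab : ¬(a = 0 ∧ b = 0))
    (heig : ∀ k, ∃ c : ℂ, u k * a + v k * b = c * a ∧ w k * a - u k * b = c * b) :
    (∑ k, (starRingEnd ℂ) (v k) * w k = 0) ∨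
    (∃ t : ℝ, ∑ k, (starRingEnd ℂ) (u k) * w k = (t : ℂ)) := by
  obtain ⟨Sr, hSr0, hSeq⟩ := hS
  by_cases hb : b = 0
  · left
    have ha : a ≠ 0 := fun h => hab ⟨h, hb⟩
    have hw : ∀ k, w k = 0 := by
      intro k
      obtain ⟨c, _, h2⟩ := heig k
      rw [hb] at h2
      simpa [ha] using h2
    simp [hw]
  · by_cases hS0 : Sr = 0
    · left; rw [hSeq, hS0]; norm_num
    right
    have hSne : (Sr : ℂ) ≠ 0 := by exact_mod_cast hS0
    have hR : ∀ k, w k * a ^ 2 = 2 * u k * a * b + v k * b ^ 2 := by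
      intro k
      obtain ⟨c, h1, h2⟩ := heig k
      have h3 : (u k * a + v k * b) * b = (w k * a - u k * b) * a := by rw [h1, h2]; ring
      linear_combination -h3
    have hRc : ∀ k, (starRingEnd ℂ) (w k) * (starRingEnd ℂ) a ^ 2 =
        2 * (starRingEnd ℂ) (u k) * (starRingEnd ℂ) a * (starRingEnd ℂ) b +
        (starRingEnd ℂ) (v k) * (starRingEnd ℂ) b ^ 2 := by
      intro k
      have := congrArg (starRingEnd ℂ) (hR k)
      simpa only [_root_.map_mul, map_add, map_pow, map_ofNat] using this
    obtain ⟨T, hT⟩ : ∃ T, ∑ k, (starRingEnd ℂ) (u k) * w k = T := ⟨_, rfl⟩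
    obtain ⟨Ur, hUr⟩ : ∃ t, ∑ k, Complex.normSq (u k) = t := ⟨_, rfl⟩
    obtain ⟨Wr, hWr⟩ : ∃ t, ∑ k, Complex.normSq (w k) = t := ⟨_, rfl⟩
    rw [hT]
    have hU : ∑ k, (starRingEnd ℂ) (u k) * u k = (Ur : ℂ) := by
      rw [← hUr]; push_cast
      exact Finset.sum_congr rfl fun k _ => by rw [Complex.normSq_eq_conj_mul_self]
    have hW : ∑ k, (starRingEnd ℂ) (w k) * w k = (Wr : ℂ) := by
      rw [← hWr]; push_cast
      exact Finset.sum_congr rfl fun k _ => by rw [Complex.normSq_eq_conj_mul_self]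
    have hTc : ∑ k, u k * (starRingEnd ℂ) (w k) = (starRingEnd ℂ) T := by
      rw [← hT, map_sum]
      exact Finset.sum_congr rfl fun k _ => by simp [_root_.map_mul, mul_comm]
    obtain ⟨nar, hnar⟩ : ∃ t, Complex.normSq a = t := ⟨_, rfl⟩
    obtain ⟨nbr, hnbr⟩ : ∃ t, Complex.normSq b = t := ⟨_, rfl⟩
    have hna : (starRingEnd ℂ) a * a = (nar : ℂ) := by
      rw [← hnar, mul_comm, Complex.mul_conj]
    have hnb : (starRingEnd ℂ) b * b = (nbr : ℂ) := by
      rw [← hnbr, mul_comm, Complex.mul_conj]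
    have hA : (starRingEnd ℂ) T * b ^ 2 = a ^ 2 * T - 2 * a * b * (Ur : ℂ) := by
      rw [← hTc, hE, Finset.sum_mul]
      have h2 : ∑ k, (starRingEnd ℂ) (u k) * v k * b ^ 2 =
          ∑ k, ((starRingEnd ℂ) (u k) * w k * a ^ 2 -
            2 * a * b * ((starRingEnd ℂ) (u k) * u k)) :=
        Finset.sum_congr rfl fun k _ => by linear_combination -(starRingEnd ℂ) (u k) * (hR k)
      rw [h2, Finset.sum_sub_distrib, ← Finset.sum_mul, ← Finset.mul_sum, hU, hT]
      ring
    have hA' : T * (starRingEnd ℂ) b ^ 2 =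
        (starRingEnd ℂ) a ^ 2 * (starRingEnd ℂ) T -
          2 * (starRingEnd ℂ) a * (starRingEnd ℂ) b * (Ur : ℂ) := by
      have := congrArg (starRingEnd ℂ) hA
      simpa only [map_sub, _root_.map_mul, map_pow, map_ofNat, Complex.conj_ofReal,
        Complex.conj_conj] using this
    have hB : (Sr : ℂ) * (starRingEnd ℂ) b ^ 2 =
        (starRingEnd ℂ) a ^ 2 * (Wr : ℂ) - 2 * (starRingEnd ℂ) a * (starRingEnd ℂ) b * T := by
      rw [← hSeq, Finset.sum_mul]
      have h2 : ∑ k, (starRingEnd ℂ) (v k) * w k * (starRingEnd ℂ) b ^ 2 =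
          ∑ k, ((starRingEnd ℂ) (w k) * w k * (starRingEnd ℂ) a ^ 2 -
            2 * (starRingEnd ℂ) a * (starRingEnd ℂ) b * ((starRingEnd ℂ) (u k) * w k)) :=
        Finset.sum_congr rfl fun k _ => by linear_combination -(w k) * (hRc k)
      rw [h2, Finset.sum_sub_distrib, ← Finset.sum_mul, ← Finset.mul_sum, hW, hT]
      ring
    have hcb : (starRingEnd ℂ) b ≠ 0 := by simpa using hb
    have ha : a ≠ 0 := by
      intro h
      rw [h] at hB
      apply hSne
      simp only [map_zero] at hB
      have hB' : (Sr : ℂ) * (starRingEnd ℂ) b ^ 2 = 0 := by rw [hB]; ring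
      exact (mul_eq_zero.mp hB').resolve_right (pow_ne_zero 2 hcb)
    have hnbpos : 0 < nbr := by rw [← hnbr]; exact Complex.normSq_pos.mpr hb
    have hnapos : 0 < nar := by rw [← hnar]; exact Complex.normSq_pos.mpr ha
    have hsum : ((nar : ℂ) + (nbr : ℂ)) ≠ 0 := by
      rw [← Complex.ofReal_add]
      exact Complex.ofReal_ne_zero.mpr (by positivity)
    have hC : T * ((nbr : ℂ) - (nar : ℂ)) =
        -2 * ((starRingEnd ℂ) a * b) * (Ur : ℂ) := by
      apply mul_right_cancel₀ hsum
      linear_combination (b ^ 2) * hA' + ((starRingEnd ℂ) a) ^ 2 * hA -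
        T * ((starRingEnd ℂ) b * b + (nbr : ℂ)) * hnb +
        T * ((starRingEnd ℂ) a * a + (nar : ℂ)) * hna -
        2 * (starRingEnd ℂ) a * b * (Ur : ℂ) * hna -
        2 * (starRingEnd ℂ) a * b * (Ur : ℂ) * hnb
    have hUnn : 0 ≤ Ur := by
      rw [← hUr]; exact Finset.sum_nonneg fun i _ => Complex.normSq_nonneg _
    have hWnn : 0 ≤ Wr := by
      rw [← hWr]; exact Finset.sum_nonneg fun i _ => Complex.normSq_nonneg _
    by_cases hU0 : Ur = 0
    · have hu : ∀ k, u k = 0 := by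
        intro k
        have h0 : ∀ i ∈ Finset.univ, (0:ℝ) ≤ Complex.normSq (u i) :=
          fun i _ => Complex.normSq_nonneg _
        have hsum0 : ∑ i, Complex.normSq (u i) = 0 := by rw [hUr]; exact hU0
        exact Complex.normSq_eq_zero.mp
          ((Finset.sum_eq_zero_iff_of_nonneg h0).mp hsum0 k (Finset.mem_univ k))
      exact ⟨0, by rw [← hT]; simp [hu]⟩
    have hUpos : 0 < Ur := lt_of_le_of_ne hUnn (Ne.symm hU0)
    have hca : (starRingEnd ℂ) a ≠ 0 := by simpa using ha
    obtain ⟨x, hx⟩ : ∃ x, (starRingEnd ℂ) a * b = x := ⟨_, rfl⟩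
    rw [hx] at hC
    have hxne : x ≠ 0 := by rw [← hx]; exact mul_ne_zero hca hb
    by_cases hd : nbr = nar
    · exfalso
      have h0 : (-2 : ℂ) * x * (Ur : ℂ) = 0 := by rw [← hC, hd]; ring
      simp only [mul_eq_zero, Complex.ofReal_eq_zero] at h0
      rcases h0 with (h0 | h0) | h0
      · norm_num at h0
      · exact hxne h0
      · exact hU0 h0
    obtain ⟨dr, hdr⟩ : ∃ t : ℝ, nbr - nar = t := ⟨_, rfl⟩
    have hdne : dr ≠ 0 := by rw [← hdr]; exact sub_ne_zero.mpr hd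
    have hdrne : (dr : ℂ) ≠ 0 := Complex.ofReal_ne_zero.mpr hdne
    have hC' : T * (dr : ℂ) = -2 * x * (Ur : ℂ) := by
      rw [← hdr]; push_cast; exact hC
    obtain ⟨Kr, hKr⟩ : ∃ t : ℝ, Wr * dr + 4 * nbr * Ur = t := ⟨_, rfl⟩
    have hBK : (Sr : ℂ) * (starRingEnd ℂ) b ^ 2 * (dr : ℂ) =
        (starRingEnd ℂ) a ^ 2 * (Kr : ℂ) := by
      rw [← hKr]; push_cast
      linear_combination (dr : ℂ) * hB - 2 * (starRingEnd ℂ) a * (starRingEnd ℂ) b * hC' +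
        4 * ((starRingEnd ℂ) a) ^ 2 * (Ur : ℂ) * hnb -
        4 * (starRingEnd ℂ) a * (starRingEnd ℂ) b * (Ur : ℂ) * hx
    have hKne : Kr ≠ 0 := by
      intro h
      rw [h] at hBK
      simp only [Complex.ofReal_zero, mul_zero, mul_eq_zero, Complex.ofReal_eq_zero,
        pow_eq_zero_iff, ne_eq] at hBK
      rcases hBK with (h0 | h0) | h0
      · exact hS0 h0
      · exact hcb (by simpa using h0)
      · exact hdne h0
    have hx2 : x ^ 2 * (Kr : ℂ) = ((Sr * nbr ^ 2 * dr : ℝ) : ℂ) := by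
      push_cast
      linear_combination -(b ^ 2) * hBK +
        (Sr : ℂ) * (dr : ℂ) * ((starRingEnd ℂ) b * b + (nbr : ℂ)) * hnb +
        (-(Kr : ℂ)) * (x + (starRingEnd ℂ) a * b) * hx
    obtain ⟨rho, hrho⟩ : ∃ t : ℝ, Sr * nbr ^ 2 * dr / Kr = t := ⟨_, rfl⟩
    have hx2' : x ^ 2 = (rho : ℂ) := by
      rw [← hrho]; push_cast
      rw [eq_div_iff (Complex.ofReal_ne_zero.mpr hKne)]
      push_cast at hx2
      linear_combination hx2
    by_cases him : x.im = 0
    · refine ⟨-2 * x.re * Ur / dr, ?_⟩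
      have hxr : x = (x.re : ℂ) := Complex.ext rfl (by simp [him])
      apply mul_right_cancel₀ hdrne
      have hrr : ((-2 * x.re * Ur / dr : ℝ) : ℂ) * (dr : ℂ) = -2 * (x.re : ℂ) * (Ur : ℂ) := by
        push_cast
        field_simp
      rw [hrr, hC']
      linear_combination (-2 : ℂ) * (Ur : ℂ) * hxr
    · exfalso
      have hre : x.re = 0 := by
        have h4 := congrArg Complex.im hx2'
        simp only [pow_two, Complex.mul_im, Complex.ofReal_im] at h4
        have h5 : x.re * x.im = 0 := by linarith
        rcases mul_eq_zero.mp h5 with h | h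
        · exact h
        · exact absurd h him
      have hrhoneg : rho < 0 := by
        have h5 := congrArg Complex.re hx2'
        simp only [pow_two, Complex.mul_re, Complex.ofReal_re, hre] at h5
        nlinarith [mul_self_pos.mpr him]
      have hnx : Complex.normSq x = nar * nbr := by
        rw [← hx, Complex.normSq_mul, Complex.normSq_conj, hnar, hnbr]
      have hNT : Complex.normSq T * dr ^ 2 = 4 * (nar * nbr) * Ur ^ 2 := by
        have h6 := congrArg Complex.normSq hC'
        simp only [Complex.normSq_mul, Complex.normSq_ofReal, hnx] at h6
        have hn2 : Complex.normSq (-2) = 4 := by norm_num [Complex.normSq]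
        rw [hn2] at h6
        nlinarith [h6]
      have hCS : Complex.normSq T ≤ Ur * Wr := by
        rw [← hT, ← hUr, ← hWr]; exact cs_aux u w
      have hSpos : 0 < Sr := lt_of_le_of_ne hSr0 (Ne.symm hS0)
      have hrhoK : rho * Kr = Sr * nbr ^ 2 * dr := by
        rw [← hrho]; field_simp
      have hdr2 : 0 < dr ^ 2 := by positivity
      have hdneg : dr < 0 := by
        rcases lt_or_gt_of_ne hdne with h | h
        · exact h
        · exfalso
          have hKpos : 0 < Kr := by
            rw [← hKr]
            nlinarith [mul_nonneg hWnn h.le, mul_pos hnbpos hUpos]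
          nlinarith [mul_pos (mul_pos hSpos (pow_pos hnbpos 2)) h]
      have hKpos : 0 < Kr := by
        have h7 : Sr * nbr ^ 2 * dr < 0 := by
          nlinarith [mul_pos (mul_pos hSpos (pow_pos hnbpos 2)) (neg_pos.mpr hdneg)]
        rcases lt_or_gt_of_ne hKne with h | h
        · exfalso; nlinarith
        · exact h
      have h8 : Wr * dr ^ 2 + 4 * nbr * Ur * dr < 0 := by
        have h9 : Kr * dr < 0 := mul_neg_of_pos_of_neg hKpos hdneg
        nlinarith [h9]
      have h9 : 4 * (nar * nbr) * Ur ≤ Wr * dr ^ 2 := by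
        nlinarith [mul_le_mul_of_nonneg_right hCS (le_of_lt hdr2)]
      nlinarith [mul_pos (mul_pos hUpos hnbpos) (neg_pos.mpr hdneg)]

theorem stmt_12 {r : ℕ} (V : Fin r → Matrix (Fin 2) (Fin 2) ℂ)
    (htr : ∀ k, (V k).trace = 0)
    (hdiag : (∑ k, (V k * (V k)ᴴ - (V k)ᴴ * V k)).IsDiag)
    (hvw : ∃ c : ℝ, 0 ≤ c ∧
      ∑ k, (starRingEnd ℂ) (V k 0 1) * V k 1 0 = (c : ℂ))
    (hcool : ∃ ψ : Fin 2 → ℂ, ψ ≠ 0 ∧ ∀ k, ∃ c : ℂ, (V k).mulVec ψ = c • ψ) :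
    (∑ k, (starRingEnd ℂ) (V k 0 1) * V k 1 0 = 0) ∨
    (∃ t : ℝ, ∑ k, (starRingEnd ℂ) (V k 0 0) * V k 1 0 = (t : ℂ)) := by
  obtain ⟨ψ, hψ, heig⟩ := hcool
  have h11 : ∀ k, V k 1 1 = - V k 0 0 := by
    intro k; have := htr k
    simp [Matrix.trace, Matrix.diag, Fin.sum_univ_two] at this
    linear_combination this
  have hE : ∑ k, V k 0 0 * (starRingEnd ℂ) (V k 1 0) =
      ∑ k, (starRingEnd ℂ) (V k 0 0) * V k 0 1 := by
    have h01 := hdiag (i := 0) (j := 1) (by decide)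
    simp only [Matrix.sum_apply, Matrix.sub_apply, Matrix.mul_apply, Fin.sum_univ_two,
      Matrix.conjTranspose_apply, Finset.sum_sub_distrib] at h01
    simp only [h11] at h01
    have e1 : ∑ x, (V x 0 0 * star (V x 1 0) + V x 0 1 * star (-V x 0 0)) =
        (∑ x, V x 0 0 * (starRingEnd ℂ) (V x 1 0)) -
        ∑ x, (starRingEnd ℂ) (V x 0 0) * V x 0 1 := by
      rw [← Finset.sum_sub_distrib]
      exact Finset.sum_congr rfl fun x _ => by
        simp only [star_neg, Complex.star_def]; ring
    have e2 : ∑ x, (star (V x 0 0) * V x 0 1 + star (V x 1 0) * (-V x 0 0)) =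
        (∑ x, (starRingEnd ℂ) (V x 0 0) * V x 0 1) -
        ∑ x, V x 0 0 * (starRingEnd ℂ) (V x 1 0) := by
      rw [← Finset.sum_sub_distrib]
      exact Finset.sum_congr rfl fun x _ => by
        simp only [Complex.star_def]; ring
    rw [e1, e2] at h01
    linear_combination h01 / 2
  refine key (fun k => V k 0 0) (fun k => V k 0 1) (fun k => V k 1 0) (ψ 0) (ψ 1) hE hvw ?_ ?_
  · rintro ⟨h0, h1⟩
    apply hψ
    funext i
    fin_cases i <;> assumption
  · intro k
    obtain ⟨c, hc⟩ := heig k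
    refine ⟨c, ?_, ?_⟩
    · have h0 := congrFun hc 0
      simp only [Matrix.mulVec, dotProduct, Fin.sum_univ_two, Pi.smul_apply,
        smul_eq_mul] at h0
      linear_combination h0
    · have h1 := congrFun hc 1
      simp only [Matrix.mulVec, dotProduct, Fin.sum_univ_two, Pi.smul_apply,
        smul_eq_mul] at h1
      rw [h11 k] at h1
      linear_combination h1
end

section
/- The following are equivalent: (i) ∑_{k=1}^r [V_k, V_k*] = 0 (the Lindblad generator is unital); (ii) μ(1/2) = 0; (iii) J_12(U) = J_21(U) for every U ∈ SU(2), i.e. the space of generators satisfies Q ⊆ {(0, y) : y ≥ 0}. -/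
open Matrix Complex

namespace Stmt13Aux

noncomputable def Wm : Matrix (Fin 2) (Fin 2) ℂ := !![0, -1; 1, 0]

lemma Wm_mem : Wm ∈ Matrix.specialUnitaryGroup (Fin 2) ℂ := by
  rw [Matrix.mem_specialUnitaryGroup_iff]
  refine ⟨?_, ?_⟩
  · rw [Matrix.mem_unitaryGroup_iff]
    ext i j
    fin_cases i <;> fin_cases j <;>
      simp [Wm, Matrix.mul_apply, Fin.sum_univ_two, Matrix.star_apply, Matrix.one_apply]
  · simp [Wm, Matrix.det_fin_two_of]

lemma swap01 {r : ℕ} (V : Fin r → Matrix (Fin 2) (Fin 2) ℂ) (U : Matrix (Fin 2) (Fin 2) ℂ) :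
    Jf V (U * Wm) 0 1 = Jf V U 1 0 := by
  unfold Jf
  refine Finset.sum_congr rfl fun k _ => ?_
  have h : ((U * Wm)ᴴ * V k * (U * Wm)) 0 1 = -((Uᴴ * V k * U) 1 0) := by
    simp [Wm, Matrix.mul_apply, Fin.sum_univ_two, Matrix.conjTranspose_apply]
    try ring
  rw [h, norm_neg]

lemma swap10 {r : ℕ} (V : Fin r → Matrix (Fin 2) (Fin 2) ℂ) (U : Matrix (Fin 2) (Fin 2) ℂ) :
    Jf V (U * Wm) 1 0 = Jf V U 0 1 := by
  unfold Jf
  refine Finset.sum_congr rfl fun k _ => ?_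
  have h : ((U * Wm)ᴴ * V k * (U * Wm)) 1 0 = -((Uᴴ * V k * U) 0 1) := by
    simp [Wm, Matrix.mul_apply, Fin.sum_univ_two, Matrix.conjTranspose_apply]
    try ring
  rw [h, norm_neg]

lemma entry_key (U B : Matrix (Fin 2) (Fin 2) ℂ) (hU : U * Uᴴ = 1) :
    (Uᴴ * (Bᴴ * B - B * Bᴴ) * U) 1 1
      = ((‖(Uᴴ * B * U) 0 1‖) ^ 2 - (‖(Uᴴ * B * U) 1 0‖) ^ 2 : ℝ) := by
  set A := Uᴴ * B * U with hA
  have hAH : Aᴴ = Uᴴ * Bᴴ * U := by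
    simp [hA, Matrix.conjTranspose_mul, Matrix.mul_assoc]
  have h1 : Uᴴ * (Bᴴ * B) * U = Aᴴ * A := by
    rw [hAH, hA]
    calc Uᴴ * (Bᴴ * B) * U = Uᴴ * Bᴴ * ((U * Uᴴ) * (B * U)) := by
          rw [hU]; simp only [Matrix.mul_assoc, Matrix.one_mul]
      _ = Uᴴ * Bᴴ * U * (Uᴴ * B * U) := by simp only [Matrix.mul_assoc]
  have h2 : Uᴴ * (B * Bᴴ) * U = A * Aᴴ := by
    rw [hAH, hA]
    calc Uᴴ * (B * Bᴴ) * U = Uᴴ * B * ((U * Uᴴ) * (Bᴴ * U)) := by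
          rw [hU]; simp only [Matrix.mul_assoc, Matrix.one_mul]
      _ = Uᴴ * B * U * (Uᴴ * Bᴴ * U) := by simp only [Matrix.mul_assoc]
  have h3 : Uᴴ * (Bᴴ * B - B * Bᴴ) * U = Aᴴ * A - A * Aᴴ := by
    rw [Matrix.mul_sub, Matrix.sub_mul, h1, h2]
  rw [h3]
  have e1 : (Aᴴ * A - A * Aᴴ) 1 1
      = (starRingEnd ℂ) (A 0 1) * A 0 1 - (starRingEnd ℂ) (A 1 0) * A 1 0 := by
    simp [Matrix.sub_apply, Matrix.mul_apply, Fin.sum_univ_two, Matrix.conjTranspose_apply]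
    ring
  rw [e1]
  rw [Complex.ofReal_sub]
  rw [Complex.sq_norm, Complex.sq_norm, Complex.normSq_eq_conj_mul_self,
    Complex.normSq_eq_conj_mul_self]

lemma key {r : ℕ} (V : Fin r → Matrix (Fin 2) (Fin 2) ℂ) (U : Matrix (Fin 2) (Fin 2) ℂ)
    (hU : U ∈ Matrix.specialUnitaryGroup (Fin 2) ℂ) :
    ((Jf V U 0 1 - Jf V U 1 0 : ℝ) : ℂ)
      = (Uᴴ * (∑ k, ((V k)ᴴ * V k - V k * (V k)ᴴ)) * U) 1 1 := by
  have hU' : U * Uᴴ = 1 := by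
    have := (Matrix.mem_specialUnitaryGroup_iff.mp hU).1
    rw [Matrix.mem_unitaryGroup_iff] at this
    exact this
  rw [Finset.mul_sum, Finset.sum_mul, Matrix.sum_apply]
  unfold Jf
  rw [← Finset.sum_sub_distrib, Complex.ofReal_sum]
  refine Finset.sum_congr rfl fun k _ => ?_
  rw [entry_key U (V k) hU']

noncomputable def cc : ℂ := ((Real.sqrt 2)⁻¹ : ℝ)

lemma hcc : cc * cc = 1 / 2 := by
  unfold cc
  rw [← Complex.ofReal_mul, ← mul_inv, Real.mul_self_sqrt (by norm_num : (2:ℝ) ≥ 0).le]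
  norm_num

noncomputable def Bm : Matrix (Fin 2) (Fin 2) ℂ := !![cc, -cc; cc, cc]
noncomputable def Cm : Matrix (Fin 2) (Fin 2) ℂ := !![cc, cc * I; cc * I, cc]

lemma conj_cc : (starRingEnd ℂ) cc = cc := by
  unfold cc; exact Complex.conj_ofReal _

lemma Bm_mem : Bm ∈ Matrix.specialUnitaryGroup (Fin 2) ℂ := by
  rw [Matrix.mem_specialUnitaryGroup_iff]
  refine ⟨?_, ?_⟩
  · rw [Matrix.mem_unitaryGroup_iff]
    ext i j
    fin_cases i <;> fin_cases j <;>
      · simp [Bm, Matrix.mul_apply, Fin.sum_univ_two, Matrix.star_apply, Matrix.one_apply,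
          conj_cc]
        try linear_combination (2:ℂ) * hcc
  · simp [Bm, Matrix.det_fin_two_of]
    linear_combination (2:ℂ) * hcc

lemma Cm_mem : Cm ∈ Matrix.specialUnitaryGroup (Fin 2) ℂ := by
  rw [Matrix.mem_specialUnitaryGroup_iff]
  refine ⟨?_, ?_⟩
  · rw [Matrix.mem_unitaryGroup_iff]
    ext i j
    fin_cases i <;> fin_cases j <;>
      · simp [Cm, Matrix.mul_apply, Fin.sum_univ_two, Matrix.star_apply, Matrix.one_apply,
          conj_cc, Complex.conj_I]
        try first | linear_combination (1 - Complex.I ^ 2) * hcc - (1/2) * Complex.I_sq | ring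
  · simp [Cm, Matrix.det_fin_two_of]
    linear_combination (1 - Complex.I ^ 2) * hcc - (1/2) * Complex.I_sq

lemma extract_zero (N : Matrix (Fin 2) (Fin 2) ℂ)
    (h : ∀ U ∈ Matrix.specialUnitaryGroup (Fin 2) ℂ, (Uᴴ * N * U) 1 1 = 0) : N = 0 := by
  have e1 := h 1 (one_mem _)
  simp [Matrix.mul_apply, Fin.sum_univ_two, Matrix.conjTranspose_apply, Matrix.one_apply] at e1
  have e2 := h Wm Wm_mem
  simp [Wm, Matrix.mul_apply, Fin.sum_univ_two, Matrix.conjTranspose_apply] at e2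
  have e3 := h Bm Bm_mem
  simp [Bm, Matrix.mul_apply, Fin.sum_univ_two, Matrix.conjTranspose_apply, conj_cc, e1, e2] at e3
  have e4 := h Cm Cm_mem
  simp [Cm, Matrix.mul_apply, Fin.sum_univ_two, Matrix.conjTranspose_apply, conj_cc,
    Complex.conj_I, e1, e2] at e4
  have k3 : N 0 1 + N 1 0 = 0 := by
    linear_combination (-2:ℂ) * e3 - 2 * (N 0 1 + N 1 0) * hcc
  have k4 : N 0 1 = N 1 0 := by
    linear_combination (2 * Complex.I) * e4 - (2 * cc * cc * (N 1 0 - N 0 1)) * Complex.I_sq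
      + (2 * (N 1 0 - N 0 1)) * hcc
  have k5 : N 0 1 = 0 := by linear_combination (1/2 : ℂ) * k3 + (1/2 : ℂ) * k4
  have k6 : N 1 0 = 0 := by linear_combination (1/2 : ℂ) * k3 - (1/2 : ℂ) * k4
  ext i j
  fin_cases i <;> fin_cases j <;> simp [e1, e2, k5, k6]

lemma Jf_nonneg {r : ℕ} (V : Fin r → Matrix (Fin 2) (Fin 2) ℂ)
    (U : Matrix (Fin 2) (Fin 2) ℂ) (i j : Fin 2) : 0 ≤ Jf V U i j := by
  unfold Jf
  exact Finset.sum_nonneg fun k _ => by positivity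

/-- Central equivalence: unitality iff `J₁₂ = J₂₁` for all special unitaries. -/
lemma central {r : ℕ} (V : Fin r → Matrix (Fin 2) (Fin 2) ℂ) :
    (∑ k, (V k * (V k)ᴴ - (V k)ᴴ * V k) = 0) ↔
      ∀ U ∈ Matrix.specialUnitaryGroup (Fin 2) ℂ, Jf V U 0 1 = Jf V U 1 0 := by
  have hNM : (∑ k, ((V k)ᴴ * V k - V k * (V k)ᴴ))
      = -(∑ k, (V k * (V k)ᴴ - (V k)ᴴ * V k)) := by
    rw [← Finset.sum_neg_distrib]
    exact Finset.sum_congr rfl fun k _ => by rw [neg_sub]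
  constructor
  · intro h U hU
    have hk := key V U hU
    rw [hNM, h, neg_zero, Matrix.mul_zero, Matrix.zero_mul] at hk
    have hk0 : ((Jf V U 0 1 - Jf V U 1 0 : ℝ) : ℂ) = 0 := by simpa using hk
    have : (Jf V U 0 1 - Jf V U 1 0 : ℝ) = 0 := by exact_mod_cast hk0
    linarith
  · intro h
    have hz : (∑ k, ((V k)ᴴ * V k - V k * (V k)ᴴ)) = 0 := by
      apply extract_zero
      intro U hU
      have hk := key V U hU
      rw [h U hU] at hk
      simpa using hk.symm
    rw [hNM, neg_eq_zero] at hz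
    exact hz

end Stmt13Aux

open Stmt13Aux in
theorem stmt_13 {r : ℕ} (V : Fin r → Matrix (Fin 2) (Fin 2) ℂ)
    (μ : ℝ → ℝ)
    (hμ : ∀ lam ∈ Set.Icc (0:ℝ) 1,
      IsGreatest {y : ℝ | ∃ U ∈ Matrix.specialUnitaryGroup (Fin 2) ℂ,
        y = Jf V U 0 1 - lam * (Jf V U 0 1 + Jf V U 1 0)} (μ lam)) :
    ((∑ k, (V k * (V k)ᴴ - (V k)ᴴ * V k) = 0) ↔ μ (1/2) = 0) ∧
    (μ (1/2) = 0 ↔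
      ∀ U ∈ Matrix.specialUnitaryGroup (Fin 2) ℂ, Jf V U 0 1 = Jf V U 1 0) ∧
    ((∀ U ∈ Matrix.specialUnitaryGroup (Fin 2) ℂ, Jf V U 0 1 = Jf V U 1 0) ↔
      Qset V ⊆ {p : ℝ × ℝ | p.1 = 0 ∧ 0 ≤ p.2}) := by
  have hg := hμ (1/2) ⟨by norm_num, by norm_num⟩
  have h2 : μ (1/2) = 0 ↔
      ∀ U ∈ Matrix.specialUnitaryGroup (Fin 2) ℂ, Jf V U 0 1 = Jf V U 1 0 := by
    constructor
    · intro h0 U hU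
      have hUW : U * Wm ∈ Matrix.specialUnitaryGroup (Fin 2) ℂ := mul_mem hU Wm_mem
      have hle1 : Jf V U 0 1 - (1/2) * (Jf V U 0 1 + Jf V U 1 0) ≤ μ (1/2) :=
        hg.2 ⟨U, hU, rfl⟩
      have hle2 : Jf V (U * Wm) 0 1 - (1/2) * (Jf V (U * Wm) 0 1 + Jf V (U * Wm) 1 0)
          ≤ μ (1/2) := hg.2 ⟨U * Wm, hUW, rfl⟩
      rw [swap01, swap10] at hle2
      rw [h0] at hle1 hle2
      linarith
    · intro h
      obtain ⟨U, hU, hμval⟩ := hg.1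
      rw [hμval, h U hU]
      ring
  have h3 : (∀ U ∈ Matrix.specialUnitaryGroup (Fin 2) ℂ, Jf V U 0 1 = Jf V U 1 0) ↔
      Qset V ⊆ {p : ℝ × ℝ | p.1 = 0 ∧ 0 ≤ p.2} := by
    constructor
    · rintro h p ⟨U, hU, rfl⟩
      refine ⟨by simp [h U hU], ?_⟩
      have := Jf_nonneg V U 0 1
      have := Jf_nonneg V U 1 0
      simp only
      linarith
    · intro h U hU
      have hp : (Jf V U 0 1 - Jf V U 1 0, Jf V U 0 1 + Jf V U 1 0) ∈ Qset V := ⟨U, hU, rfl⟩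
      have := (h hp).1
      simp only at this
      linarith
  exact ⟨(central V).trans h2.symm, h2, h3⟩
end

section
/- The following are equivalent: (i) every V_k is normal and the matrices V_1, …, V_r pairwise commute; (ii) (0,0) ∈ Q, i.e. there exists U ∈ SU(2) with J_12(U) = J_21(U) = 0; (iii) ∑_{k=1}^r [V_k, V_k*] = 0 and every λ ∈ [0,1] is stabilizable. -/
open Matrix Complex

lemma jf_eq_zero_iff {r : ℕ} (V : Fin r → Matrix (Fin 2) (Fin 2) ℂ)
    (U : Matrix (Fin 2) (Fin 2) ℂ) (i j : Fin 2) :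
    Jf V U i j = 0 ↔ ∀ k, (Uᴴ * V k * U) i j = 0 := by
  unfold Jf
  rw [Finset.sum_eq_zero_iff_of_nonneg (fun k _ => by positivity)]
  simp [pow_eq_zero_iff]

lemma diag_mul_comm (W X : Matrix (Fin 2) (Fin 2) ℂ)
    (hW1 : W 0 1 = 0) (hW2 : W 1 0 = 0) (hX1 : X 0 1 = 0) (hX2 : X 1 0 = 0) :
    W * X = X * W := by
  ext i j
  fin_cases i <;> fin_cases j <;>
    simp [mul_apply, Fin.sum_univ_two, hW1, hW2, hX1, hX2, mul_comm]

lemma comm_entry (W : Matrix (Fin 2) (Fin 2) ℂ) :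
    ((W * Wᴴ - Wᴴ * W) 0 0).re = ‖W 0 1‖ ^ 2 - ‖W 1 0‖ ^ 2 := by
  rw [Complex.sq_norm, Complex.sq_norm]
  simp only [Matrix.sub_apply, mul_apply, Fin.sum_univ_two, conjTranspose_apply, Complex.sub_re,
    Complex.add_re, Complex.mul_re, RCLike.star_def, Complex.conj_re, Complex.conj_im,
    Complex.normSq_apply]
  ring

lemma myconj_mul (U A B : Matrix (Fin 2) (Fin 2) ℂ) (hUU : U * Uᴴ = 1) :
    (Uᴴ * A * U) * (Uᴴ * B * U) = Uᴴ * (A * B) * U := by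
  have : U * (Uᴴ * B * U) = B * U := by
    rw [← Matrix.mul_assoc, ← Matrix.mul_assoc, hUU, Matrix.one_mul]
  rw [Matrix.mul_assoc (Uᴴ * A), this, Matrix.mul_assoc Uᴴ A (B * U),
    ← Matrix.mul_assoc A B U, ← Matrix.mul_assoc Uᴴ (A*B) U]

lemma conjT_conj (U A : Matrix (Fin 2) (Fin 2) ℂ) :
    (Uᴴ * A * U)ᴴ = Uᴴ * Aᴴ * U := by
  simp [conjTranspose_mul, Matrix.mul_assoc]

lemma unconj_mul (U A B : Matrix (Fin 2) (Fin 2) ℂ) (hUsU : Uᴴ * U = 1) :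
    (U * A * Uᴴ) * (U * B * Uᴴ) = U * (A * B) * Uᴴ := by
  have h := myconj_mul Uᴴ A B (by simpa using hUsU)
  simpa using h

lemma unconjT (U A : Matrix (Fin 2) (Fin 2) ℂ) :
    (U * A * Uᴴ)ᴴ = U * Aᴴ * Uᴴ := by
  have h := conjT_conj Uᴴ A
  simpa using h

lemma normal_normSq (A : Matrix (Fin 2) (Fin 2) ℂ) (h : A * Aᴴ = Aᴴ * A) :
    Complex.normSq (A 0 1) = Complex.normSq (A 1 0) := by
  have h0 := congrArg (fun M => (M 0 0).re) h
  simp only [mul_apply, Fin.sum_univ_two, conjTranspose_apply, Complex.add_re,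
    Complex.mul_re, RCLike.star_def, Complex.conj_re, Complex.conj_im] at h0
  simp only [Complex.normSq_apply]
  nlinarith [h0]

lemma back_comm (U W X : Matrix (Fin 2) (Fin 2) ℂ) (hUsU : Uᴴ * U = 1)
    (hW1 : W 0 1 = 0) (hW2 : W 1 0 = 0) (hX1 : X 0 1 = 0) (hX2 : X 1 0 = 0) :
    (U * W * Uᴴ) * (U * X * Uᴴ) = (U * X * Uᴴ) * (U * W * Uᴴ) := by
  rw [unconj_mul _ _ _ hUsU, unconj_mul _ _ _ hUsU, diag_mul_comm W X hW1 hW2 hX1 hX2]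

lemma back_normal (U W : Matrix (Fin 2) (Fin 2) ℂ) (hUsU : Uᴴ * U = 1)
    (hW1 : W 0 1 = 0) (hW2 : W 1 0 = 0) :
    (U * W * Uᴴ) * (U * W * Uᴴ)ᴴ = (U * W * Uᴴ)ᴴ * (U * W * Uᴴ) := by
  rw [unconjT, unconj_mul _ _ _ hUsU, unconj_mul _ _ _ hUsU,
    diag_mul_comm W Wᴴ hW1 hW2 (by simp [conjTranspose_apply, hW2])
      (by simp [conjTranspose_apply, hW1])]

lemma jdiff {r : ℕ} (V : Fin r → Matrix (Fin 2) (Fin 2) ℂ)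
    (U : Matrix (Fin 2) (Fin 2) ℂ) (hUU : U * Uᴴ = 1)
    (hsum : ∑ k, (V k * (V k)ᴴ - (V k)ᴴ * V k) = 0) :
    Jf V U 0 1 = Jf V U 1 0 := by
  have key : ∀ k, ((Uᴴ * (V k * (V k)ᴴ - (V k)ᴴ * V k) * U) 0 0).re
      = ‖(Uᴴ * V k * U) 0 1‖ ^ 2 - ‖(Uᴴ * V k * U) 1 0‖ ^ 2 := by
    intro k
    have e : Uᴴ * (V k * (V k)ᴴ - (V k)ᴴ * V k) * U
        = (Uᴴ * V k * U) * (Uᴴ * V k * U)ᴴ - (Uᴴ * V k * U)ᴴ * (Uᴴ * V k * U) := by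
      rw [conjT_conj, myconj_mul _ _ _ hUU, myconj_mul _ _ _ hUU, Matrix.mul_sub,
        Matrix.sub_mul]
    rw [e, comm_entry]
  have h := congrArg (fun M => ((Uᴴ * M * U) 0 0).re) hsum
  simp only [Matrix.mul_zero, Matrix.zero_mul, Matrix.zero_apply, Complex.zero_re] at h
  rw [Matrix.mul_sum, Matrix.sum_mul, Matrix.sum_apply, Complex.re_sum] at h
  rw [Finset.sum_congr rfl (fun k _ => key k)] at h
  rw [Finset.sum_sub_distrib] at h
  unfold Jf
  linarith [h]

lemma exists_diag {r : ℕ} (V : Fin r → Matrix (Fin 2) (Fin 2) ℂ)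
    (hn : ∀ k, V k * (V k)ᴴ = (V k)ᴴ * V k)
    (hc : ∀ k l, V k * V l = V l * V k) :
    ∃ U ∈ Matrix.specialUnitaryGroup (Fin 2) ℂ,
      ∀ k, (Uᴴ * V k * U) 0 1 = 0 ∧ (Uᴴ * V k * U) 1 0 = 0 := by
  by_cases hall : ∀ k, V k 0 1 = 0 ∧ V k 1 0 = 0
  · refine ⟨1, one_mem _, fun k => ?_⟩
    simpa using hall k
  · push_neg at hall
    obtain ⟨k0, hk0⟩ := hall
    have hb : V k0 0 1 ≠ 0 := by
      intro h01
      have h2 := normal_normSq _ (hn k0)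
      rw [h01] at h2
      simp only [map_zero] at h2
      exact hk0 h01 (by simpa using h2.symm)
    set a := V k0 0 0 with ha
    set b := V k0 0 1 with hbdef
    set c := V k0 1 0 with hcdef
    set d := V k0 1 1 with hd
    obtain ⟨s, hs⟩ := IsAlgClosed.exists_pow_nat_eq ((a+d)^2 - 4*(a*d - b*c)) two_pos
    obtain ⟨μ, hμ⟩ : ∃ μ : ℂ, μ*μ = (a+d)*μ - (a*d - b*c) :=
      ⟨((a+d)+s)/2, by linear_combination hs/4⟩
    set q : ℂ := μ - a with hq
    set N : ℝ := Complex.normSq b + Complex.normSq q with hNdef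
    have hNpos : 0 < N := by
      have := Complex.normSq_pos.mpr hb
      have := Complex.normSq_nonneg q
      simp only [hNdef]; linarith
    set n : ℝ := Real.sqrt N with hndef
    have hn2 : (n:ℂ) * (n:ℂ) = (N:ℂ) := by
      rw [← Complex.ofReal_mul, Real.mul_self_sqrt hNpos.le]
    have hnne : (n:ℂ) ≠ 0 := by
      simp [hndef, Real.sqrt_eq_zero', not_le, hNpos]
    have hkey : (starRingEnd ℂ) b * b + (starRingEnd ℂ) q * q = (N:ℂ) := by
      simp only [hNdef, Complex.ofReal_add]
      rw [← Complex.normSq_eq_conj_mul_self, ← Complex.normSq_eq_conj_mul_self]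
    set U : Matrix (Fin 2) (Fin 2) ℂ :=
      !![b/(n:ℂ), -(starRingEnd ℂ) q/(n:ℂ); q/(n:ℂ), (starRingEnd ℂ) b/(n:ℂ)] with hUdef
    have hU00 : U 0 0 = b/(n:ℂ) := by simp [hUdef]
    have hU01 : U 0 1 = -(starRingEnd ℂ) q/(n:ℂ) := by simp [hUdef]
    have hU10 : U 1 0 = q/(n:ℂ) := by simp [hUdef]
    have hU11 : U 1 1 = (starRingEnd ℂ) b/(n:ℂ) := by simp [hUdef]
    have hsU : star U * U = 1 := by
      ext i j
      fin_cases i <;> fin_cases j <;>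
        · simp only [Fin.mk_zero, Fin.mk_one, Fin.isValue, star_eq_conjTranspose, mul_apply,
            Fin.sum_univ_two, conjTranspose_apply, hU00, hU01, hU10, hU11,
            Matrix.one_apply, RCLike.star_def, map_div₀, map_neg, Complex.conj_conj,
            Complex.conj_ofReal]
          norm_num
          try field_simp
          try linear_combination hkey - hn2
          try linear_combination hkey - hn2
          try ring
    have hUmem : U ∈ Matrix.specialUnitaryGroup (Fin 2) ℂ := by
      rw [Matrix.mem_specialUnitaryGroup_iff]
      refine ⟨Matrix.mem_unitaryGroup_iff'.mpr hsU, ?_⟩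
      rw [Matrix.det_fin_two, hU00, hU01, hU10, hU11]
      field_simp
      linear_combination hkey - hn2
    have hUU : U * Uᴴ = 1 := by
      rw [← Matrix.star_eq_conjTranspose]
      exact mul_eq_one_comm.mpr hsU
    set W : Matrix (Fin 2) (Fin 2) ℂ := Uᴴ * V k0 * U with hWdef
    have hW10 : W 1 0 = 0 := by
      simp only [hWdef, mul_apply, Fin.sum_univ_two, conjTranspose_apply,
        hU00, hU01, hU10, hU11, RCLike.star_def,
        map_div₀, map_neg, Complex.conj_conj, Complex.conj_ofReal, ← ha, ← hbdef, ← hcdef, ← hd]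
      linear_combination (-b)/((n:ℂ)*(n:ℂ)) * hμ
    have hWnormal : W * Wᴴ = Wᴴ * W := by
      rw [hWdef, conjT_conj, myconj_mul _ _ _ hUU, myconj_mul _ _ _ hUU, hn k0]
    have hW01 : W 0 1 = 0 := by
      have h2 := normal_normSq _ hWnormal
      rw [hW10] at h2
      simpa using h2
    have hne : W 1 1 ≠ W 0 0 := by
      intro h
      have hWs : W = W 0 0 • (1 : Matrix (Fin 2) (Fin 2) ℂ) := by
        ext i j
        fin_cases i <;> fin_cases j <;>
          simp [hW01, hW10, h, Matrix.one_apply]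
      have hV : V k0 = U * W * Uᴴ := by
        rw [hWdef, ← Matrix.mul_assoc, ← Matrix.mul_assoc, hUU, Matrix.one_mul,
          Matrix.mul_assoc, hUU, Matrix.mul_one]
      rw [hWs] at hV
      have : V k0 0 1 = 0 := by
        rw [hV]
        simp [Matrix.mul_smul, Matrix.smul_mul, hUU, Matrix.one_apply]
      exact hb this
    refine ⟨U, hUmem, fun l => ?_⟩
    have hcomm : (Uᴴ * V l * U) * W = W * (Uᴴ * V l * U) := by
      rw [hWdef, myconj_mul _ _ _ hUU, myconj_mul _ _ _ hUU, hc l k0]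
    constructor
    · have h01 := congrArg (fun M => M 0 1) hcomm
      simp only [mul_apply, Fin.sum_univ_two, hW01, hW10] at h01
      have : (Uᴴ * V l * U) 0 1 * (W 1 1 - W 0 0) = 0 := by
        simp only [mul_apply, Fin.sum_univ_two] at h01 ⊢
        linear_combination h01
      rcases mul_eq_zero.mp this with h | h
      · exact h
      · exact absurd (sub_eq_zero.mp h) hne
    · have h10 := congrArg (fun M => M 1 0) hcomm
      simp only [mul_apply, Fin.sum_univ_two, hW01, hW10] at h10
      have : (Uᴴ * V l * U) 1 0 * (W 0 0 - W 1 1) = 0 := by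
        simp only [mul_apply, Fin.sum_univ_two] at h10 ⊢
        linear_combination h10
      rcases mul_eq_zero.mp this with h | h
      · exact h
      · exact absurd (sub_eq_zero.mp h).symm hne

theorem stmt_14 {r : ℕ} (V : Fin r → Matrix (Fin 2) (Fin 2) ℂ) :
    (((∀ k, V k * (V k)ᴴ = (V k)ᴴ * V k) ∧ (∀ k l, V k * V l = V l * V k)) ↔
      (∃ U ∈ Matrix.specialUnitaryGroup (Fin 2) ℂ,
        Jf V U 0 1 = 0 ∧ Jf V U 1 0 = 0)) ∧
    ((∃ U ∈ Matrix.specialUnitaryGroup (Fin 2) ℂ,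
        Jf V U 0 1 = 0 ∧ Jf V U 1 0 = 0) ↔
      ((∑ k, (V k * (V k)ᴴ - (V k)ᴴ * V k) = 0) ∧
        ∀ lam ∈ Set.Icc (0:ℝ) 1, Stabilizable V lam)) := by
  have back : ∀ U ∈ Matrix.specialUnitaryGroup (Fin 2) ℂ,
      Jf V U 0 1 = 0 → Jf V U 1 0 = 0 →
      (∀ k, V k * (V k)ᴴ = (V k)ᴴ * V k) ∧ (∀ k l, V k * V l = V l * V k) := by
    intro U hU h1 h2
    have hU' := (Matrix.mem_specialUnitaryGroup_iff.mp hU).1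
    have hsU : star U * U = 1 := Matrix.mem_unitaryGroup_iff'.mp hU'
    have hUsU : Uᴴ * U = 1 := by rw [← Matrix.star_eq_conjTranspose]; exact hsU
    have hUU : U * Uᴴ = 1 := by
      rw [← Matrix.star_eq_conjTranspose]; exact mul_eq_one_comm.mpr hsU
    have e1 := (jf_eq_zero_iff V U 0 1).mp h1
    have e2 := (jf_eq_zero_iff V U 1 0).mp h2
    have hVk : ∀ k, V k = U * (Uᴴ * V k * U) * Uᴴ := fun k => by
      rw [← Matrix.mul_assoc, ← Matrix.mul_assoc, hUU, Matrix.one_mul, Matrix.mul_assoc,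
        hUU, Matrix.mul_one]
    constructor
    · intro k
      rw [hVk k]
      exact back_normal U _ hUsU (e1 k) (e2 k)
    · intro k l
      rw [hVk k, hVk l]
      exact back_comm U _ _ hUsU (e1 k) (e2 k) (e1 l) (e2 l)
  have fwd : ((∀ k, V k * (V k)ᴴ = (V k)ᴴ * V k) ∧ (∀ k l, V k * V l = V l * V k)) ↔
      (∃ U ∈ Matrix.specialUnitaryGroup (Fin 2) ℂ,
        Jf V U 0 1 = 0 ∧ Jf V U 1 0 = 0) := by
    constructor
    · rintro ⟨hn, hc⟩
      obtain ⟨U, hU, hd⟩ := exists_diag V hn hc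
      exact ⟨U, hU, (jf_eq_zero_iff V U 0 1).mpr (fun k => (hd k).1),
        (jf_eq_zero_iff V U 1 0).mpr (fun k => (hd k).2)⟩
    · rintro ⟨U, hU, h1, h2⟩
      exact back U hU h1 h2
  refine ⟨fwd, ?_, ?_⟩
  · rintro ⟨U, hU, h1, h2⟩
    obtain ⟨hn, _⟩ := back U hU h1 h2
    refine ⟨Finset.sum_eq_zero (fun k _ => by rw [hn k, sub_self]), ?_⟩
    intro lam _
    exact ⟨U, hU, by rw [h1, h2]; ring⟩
  · rintro ⟨hsum, hstab⟩
    obtain ⟨U, hU, h0⟩ := hstab 0 ⟨le_refl 0, zero_le_one⟩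
    have hU' := (Matrix.mem_specialUnitaryGroup_iff.mp hU).1
    have hsU : star U * U = 1 := Matrix.mem_unitaryGroup_iff'.mp hU'
    have hUU : U * Uᴴ = 1 := by
      rw [← Matrix.star_eq_conjTranspose]; exact mul_eq_one_comm.mpr hsU
    have h1 : Jf V U 0 1 = 0 := by linarith [h0]
    have h2 : Jf V U 1 0 = 0 := by
      have := jdiff V U hUU hsum
      linarith
    exact ⟨U, hU, h1, h2⟩
end

section
/- Let γ₁ ≥ γ₂ ≥ γ₃ ≥ 0 and take the three Lindblad terms V₁ = √γ₁·σ_x, V₂ = √γ₂·σ_y, V₃ = √γ₃·σ_z. Then the set of achievable values {J_12(U) : U ∈ SU(2)} equals the closed interval [γ₂ + γ₃, γ₁ + γ₂]. -/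
open Matrix Complex

noncomputable def Umat (a b : ℂ) : Matrix (Fin 2) (Fin 2) ℂ :=
  !![a, b; -(starRingEnd ℂ) b, (starRingEnd ℂ) a]

lemma Umat_mem (a b : ℂ) (h : Complex.normSq a + Complex.normSq b = 1) :
    Umat a b ∈ Matrix.specialUnitaryGroup (Fin 2) ℂ := by
  have h' : a * (starRingEnd ℂ) a + b * (starRingEnd ℂ) b = 1 := by
    rw [Complex.mul_conj, Complex.mul_conj]; exact_mod_cast h
  rw [Matrix.mem_specialUnitaryGroup_iff]
  constructor
  · rw [Matrix.mem_unitaryGroup_iff']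
    ext i j
    fin_cases i <;> fin_cases j <;>
      simp [Umat, Matrix.mul_apply, Fin.sum_univ_two, Matrix.conjTranspose_apply,
        Matrix.one_apply]
    · linear_combination h'
    · ring
    · ring
    · linear_combination h'
  · have hdet : (Umat a b).det = a * (starRingEnd ℂ) a - b * -(starRingEnd ℂ) b := by
      simp [Umat, Matrix.det_fin_two]
    rw [hdet]
    linear_combination h'

lemma habs (γ : ℝ) (hγ : 0 ≤ γ) (z : ℂ) :
    ‖(Real.sqrt γ : ℂ) * z‖ ^ 2 = γ * Complex.normSq z := by
  rw [norm_mul, mul_pow, Complex.sq_norm, Complex.sq_norm, Complex.normSq_ofReal,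
    Real.mul_self_sqrt hγ]

lemma Jf_Umat (γ₁ γ₂ γ₃ : ℝ) (h1 : 0 ≤ γ₁) (h2 : 0 ≤ γ₂) (h3 : 0 ≤ γ₃)
    (V : Fin 3 → Matrix (Fin 2) (Fin 2) ℂ)
    (hV0 : V 0 = (Real.sqrt γ₁ : ℂ) • (!![0, 1; 1, 0] : Matrix (Fin 2) (Fin 2) ℂ))
    (hV1 : V 1 = (Real.sqrt γ₂ : ℂ) • (!![0, -Complex.I; Complex.I, 0] : Matrix (Fin 2) (Fin 2) ℂ))
    (hV2 : V 2 = (Real.sqrt γ₃ : ℂ) • (!![1, 0; 0, -1] : Matrix (Fin 2) (Fin 2) ℂ))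
    (a b : ℂ) :
    Jf V (Umat a b) 0 1 =
      γ₁ * (Complex.normSq a ^ 2 + Complex.normSq b ^ 2 - 2 * (a ^ 2 * b ^ 2).re)
      + γ₂ * (Complex.normSq a ^ 2 + Complex.normSq b ^ 2 + 2 * (a ^ 2 * b ^ 2).re)
      + γ₃ * (4 * Complex.normSq a * Complex.normSq b) := by
  have e0 : ((Umat a b)ᴴ * V 0 * Umat a b) 0 1
      = (Real.sqrt γ₁ : ℂ) * ((starRingEnd ℂ) a ^ 2 - b ^ 2) := by
    simp [Umat, hV0, Matrix.mul_apply, Fin.sum_univ_two, Matrix.conjTranspose_apply]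
    ring
  have e1 : ((Umat a b)ᴴ * V 1 * Umat a b) 0 1
      = (Real.sqrt γ₂ : ℂ) * (-Complex.I * ((starRingEnd ℂ) a ^ 2 + b ^ 2)) := by
    simp [Umat, hV1, Matrix.mul_apply, Fin.sum_univ_two, Matrix.conjTranspose_apply]
    ring
  have e2 : ((Umat a b)ᴴ * V 2 * Umat a b) 0 1
      = (Real.sqrt γ₃ : ℂ) * (2 * (starRingEnd ℂ) a * b) := by
    simp [Umat, hV2, Matrix.mul_apply, Fin.sum_univ_two, Matrix.conjTranspose_apply]
    ring
  have key : (((starRingEnd ℂ) a) ^ 2 * ((starRingEnd ℂ) b) ^ 2).re = (a ^ 2 * b ^ 2).re := by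
    rw [← Complex.conj_re (a ^ 2 * b ^ 2)]
    congr 1
    simp [_root_.map_mul, _root_.map_pow]
  rw [Jf, Fin.sum_univ_three, e0, e1, e2, habs γ₁ h1, habs γ₂ h2, habs γ₃ h3]
  simp only [Complex.normSq_mul, Complex.normSq_sub, Complex.normSq_add,
    _root_.map_pow, Complex.normSq_conj, Complex.normSq_neg, Complex.normSq_I, key]
  norm_num
  try ring

lemma bound_low (γ₁ γ₂ γ₃ s t x : ℝ) (h12 : γ₂ ≤ γ₁) (h23 : γ₃ ≤ γ₂) (h3 : 0 ≤ γ₃)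
    (hst : s + t = 1) (hs : 0 ≤ s) (ht : 0 ≤ t) (hx1 : x ≤ s * t) (hx2 : -(s * t) ≤ x) :
    γ₂ + γ₃ ≤ γ₁ * (s ^ 2 + t ^ 2 - 2 * x) + γ₂ * (s ^ 2 + t ^ 2 + 2 * x)
      + γ₃ * (4 * s * t) := by
  have htt : t = 1 - s := by linarith
  subst htt
  nlinarith [mul_nonneg (sub_nonneg.2 h12) (sub_nonneg.2 hx1),
    mul_nonneg (sub_nonneg.2 (h23.trans h12)) (sq_nonneg (1 - 2 * s))]

lemma bound_high (γ₁ γ₂ γ₃ s t x : ℝ) (h12 : γ₂ ≤ γ₁) (h23 : γ₃ ≤ γ₂) (h3 : 0 ≤ γ₃)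
    (hst : s + t = 1) (hs : 0 ≤ s) (ht : 0 ≤ t) (hx1 : x ≤ s * t) (hx2 : -(s * t) ≤ x) :
    γ₁ * (s ^ 2 + t ^ 2 - 2 * x) + γ₂ * (s ^ 2 + t ^ 2 + 2 * x)
      + γ₃ * (4 * s * t) ≤ γ₁ + γ₂ := by
  have htt : t = 1 - s := by linarith
  subst htt
  nlinarith [mul_nonneg (sub_nonneg.2 h12) (by linarith : (0:ℝ) ≤ s * (1 - s) + x),
    mul_nonneg (sub_nonneg.2 h23) (mul_nonneg hs ht)]

theorem stmt_16 (γ₁ γ₂ γ₃ : ℝ) (h12 : γ₂ ≤ γ₁) (h23 : γ₃ ≤ γ₂) (h3 : 0 ≤ γ₃)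
    (V : Fin 3 → Matrix (Fin 2) (Fin 2) ℂ)
    (hV0 : V 0 = (Real.sqrt γ₁ : ℂ) • (!![0, 1; 1, 0] : Matrix (Fin 2) (Fin 2) ℂ))
    (hV1 : V 1 = (Real.sqrt γ₂ : ℂ) • (!![0, -Complex.I; Complex.I, 0] : Matrix (Fin 2) (Fin 2) ℂ))
    (hV2 : V 2 = (Real.sqrt γ₃ : ℂ) • (!![1, 0; 0, -1] : Matrix (Fin 2) (Fin 2) ℂ)) :
    {y : ℝ | ∃ U ∈ Matrix.specialUnitaryGroup (Fin 2) ℂ, y = Jf V U 0 1} =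
      Set.Icc (γ₂ + γ₃) (γ₁ + γ₂) := by
  have h2 : 0 ≤ γ₂ := h3.trans h23
  have h1 : 0 ≤ γ₁ := h2.trans h12
  ext y
  simp only [Set.mem_setOf_eq, Set.mem_Icc]
  constructor
  · rintro ⟨U, hU, rfl⟩
    obtain ⟨hu, hdet⟩ := Matrix.mem_specialUnitaryGroup_iff.mp hU
    have hadj : Uᴴ = U.adjugate := by
      have ha : U * U.adjugate = 1 := by rw [Matrix.mul_adjugate, hdet, one_smul]
      have hb : Uᴴ * U = 1 := by
        rw [← Matrix.star_eq_conjTranspose]; exact Matrix.mem_unitaryGroup_iff'.mp hu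
      calc Uᴴ = Uᴴ * (U * U.adjugate) := by rw [ha, mul_one]
        _ = (Uᴴ * U) * U.adjugate := by rw [mul_assoc]
        _ = U.adjugate := by rw [hb, one_mul]
    set a := U 0 0 with ha_def
    set b := U 0 1 with hb_def
    have hd : U 1 1 = (starRingEnd ℂ) a := by
      have := congrFun (congrFun hadj 0) 0
      simp [Matrix.conjTranspose_apply, Matrix.adjugate_fin_two] at this
      exact this.symm
    have hc : U 1 0 = -(starRingEnd ℂ) b := by
      have h0 : (starRingEnd ℂ) (U 1 0) = -b := by
        have := congrFun (congrFun hadj 0) 1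
        simpa [Matrix.conjTranspose_apply, Matrix.adjugate_fin_two] using this
      rw [← Complex.conj_conj (U 1 0), h0, map_neg]
    have hnorm : Complex.normSq a + Complex.normSq b = 1 := by
      rw [Matrix.det_fin_two, hd, hc] at hdet
      have : ((Complex.normSq a : ℂ)) + ((Complex.normSq b : ℂ)) = 1 := by
        rw [← Complex.mul_conj, ← Complex.mul_conj]
        linear_combination hdet
      exact_mod_cast this
    have hU_eq : U = Umat a b := by
      ext i j
      fin_cases i <;> fin_cases j <;> simp [Umat, hd, hc, ha_def, hb_def]
    rw [hU_eq, Jf_Umat γ₁ γ₂ γ₃ h1 h2 h3 V hV0 hV1 hV2 a b]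
    have hxabs : |(a ^ 2 * b ^ 2).re| ≤ Complex.normSq a * Complex.normSq b := by
      calc |(a ^ 2 * b ^ 2).re| ≤ ‖a ^ 2 * b ^ 2‖ := Complex.abs_re_le_norm _
        _ = Complex.normSq a * Complex.normSq b := by
          rw [norm_mul, norm_pow, norm_pow, Complex.sq_norm, Complex.sq_norm]
    have hx := abs_le.mp hxabs
    constructor
    · exact bound_low γ₁ γ₂ γ₃ _ _ _ h12 h23 h3 hnorm (Complex.normSq_nonneg a)
        (Complex.normSq_nonneg b) hx.2 hx.1
    · exact bound_high γ₁ γ₂ γ₃ _ _ _ h12 h23 h3 hnorm (Complex.normSq_nonneg a)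
        (Complex.normSq_nonneg b) hx.2 hx.1
  · rintro ⟨hy1, hy2⟩
    rcases eq_or_lt_of_le (by linarith : (0:ℝ) ≤ γ₁ - γ₃) with hD0 | hDpos
    · refine ⟨Umat 1 0, Umat_mem 1 0 (by simp), ?_⟩
      rw [Jf_Umat γ₁ γ₂ γ₃ h1 h2 h3 V hV0 hV1 hV2 1 0]
      simp
      linarith
    · set c : ℝ := (γ₁ + γ₂ - y) / (γ₁ - γ₃) with hc_def
      have hc0 : 0 ≤ c := div_nonneg (by linarith) (by linarith)
      have hc1 : c ≤ 1 := (div_le_one hDpos).mpr (by linarith)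
      have hcD : c * (γ₁ - γ₃) = γ₁ + γ₂ - y := by
        rw [hc_def, div_mul_cancel₀ _ hDpos.ne']
      set u : ℝ := Real.sqrt (1 - c) with hu_def
      have hu2 : u ^ 2 = 1 - c := Real.sq_sqrt (by linarith)
      have hu0 : 0 ≤ u := Real.sqrt_nonneg _
      have hu1 : u ≤ 1 := by
        nlinarith [hu2, hc0]
      set p : ℝ := Real.sqrt ((1 + u) / 2) with hp_def
      set q : ℝ := Real.sqrt ((1 - u) / 2) with hq_def
      have hp2 : p ^ 2 = (1 + u) / 2 := Real.sq_sqrt (by linarith)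
      have hq2 : q ^ 2 = (1 - u) / 2 := Real.sq_sqrt (by linarith)
      have hns : Complex.normSq (p : ℂ) = p ^ 2 := by
        rw [Complex.normSq_ofReal]; ring
      have hnt : Complex.normSq (q : ℂ) = q ^ 2 := by
        rw [Complex.normSq_ofReal]; ring
      refine ⟨Umat (p : ℂ) (q : ℂ), Umat_mem _ _ (by rw [hns, hnt, hp2, hq2]; ring), ?_⟩
      rw [Jf_Umat γ₁ γ₂ γ₃ h1 h2 h3 V hV0 hV1 hV2 (p : ℂ) (q : ℂ)]
      have hre : (((p : ℂ)) ^ 2 * ((q : ℂ)) ^ 2).re = p ^ 2 * q ^ 2 := by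
        push_cast
        norm_cast
      rw [hns, hnt, hre, hp2, hq2]
      nlinarith [hcD, hu2]
end

section
/- Assume γ₊ > γ₋ (so Δ > 0). Then the space of generators is the graph of a parabolic segment: Q = {(a, Σ + δ·(1 − a²/Δ²)) : a ∈ [−Δ, Δ]}. Moreover, for every x ∈ ℝ the unitary U = exp(iπx σ_x) yields the point with a = Δ·cos(2πx), i.e. J_12(U) − J_21(U) = Δ·cos(2πx) and J_12(U) + J_21(U) = Σ + δ·sin²(2πx). -/
open Matrix Complex

lemma jf_formula (γp γm γz : ℝ) (hp : 0 ≤ γp) (hm : 0 ≤ γm) (hz : 0 ≤ γz)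
    (V : Fin 3 → Matrix (Fin 2) (Fin 2) ℂ)
    (hV0 : V 0 = (Real.sqrt γp : ℂ) • ((1/2 : ℂ) •
      ((!![0, 1; 1, 0] : Matrix (Fin 2) (Fin 2) ℂ)
        + Complex.I • (!![0, -Complex.I; Complex.I, 0] : Matrix (Fin 2) (Fin 2) ℂ))))
    (hV1 : V 1 = (Real.sqrt γm : ℂ) • ((1/2 : ℂ) •
      ((!![0, 1; 1, 0] : Matrix (Fin 2) (Fin 2) ℂ)
        - Complex.I • (!![0, -Complex.I; Complex.I, 0] : Matrix (Fin 2) (Fin 2) ℂ))))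
    (hV2 : V 2 = (Real.sqrt γz : ℂ) • (!![1, 0; 0, -1] : Matrix (Fin 2) (Fin 2) ℂ))
    (U : Matrix (Fin 2) (Fin 2) ℂ) (i j : Fin 2) :
    Jf V U i j = γp * norm (star (U 0 i) * U 1 j) ^ 2
      + γm * norm (star (U 1 i) * U 0 j) ^ 2
      + γz * norm (star (U 0 i) * U 0 j - star (U 1 i) * U 1 j) ^ 2 := by
  have h0 : (Uᴴ * V 0 * U) i j = (Real.sqrt γp : ℂ) * (star (U 0 i) * U 1 j) := by
    rw [hV0]; simp [Matrix.mul_apply, Fin.sum_univ_two, conjTranspose_apply]; ring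
  have h1 : (Uᴴ * V 1 * U) i j = (Real.sqrt γm : ℂ) * (star (U 1 i) * U 0 j) := by
    rw [hV1]; simp [Matrix.mul_apply, Fin.sum_univ_two, conjTranspose_apply]; ring
  have h2 : (Uᴴ * V 2 * U) i j = (Real.sqrt γz : ℂ) * (star (U 0 i) * U 0 j - star (U 1 i) * U 1 j) := by
    rw [hV2]; simp [Matrix.mul_apply, Fin.sum_univ_two, conjTranspose_apply]; ring
  simp only [Jf, Fin.sum_univ_three, h0, h1, h2, norm_mul, Complex.norm_real, Real.norm_eq_abs,
    _root_.abs_of_nonneg (Real.sqrt_nonneg _), mul_pow, Real.sq_sqrt hp, Real.sq_sqrt hm,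
    Real.sq_sqrt hz]

lemma jf_su2 (γp γm γz : ℝ) (hp : 0 ≤ γp) (hm : 0 ≤ γm) (hz : 0 ≤ γz)
    (V : Fin 3 → Matrix (Fin 2) (Fin 2) ℂ)
    (hV0 : V 0 = (Real.sqrt γp : ℂ) • ((1/2 : ℂ) •
      ((!![0, 1; 1, 0] : Matrix (Fin 2) (Fin 2) ℂ)
        + Complex.I • (!![0, -Complex.I; Complex.I, 0] : Matrix (Fin 2) (Fin 2) ℂ))))
    (hV1 : V 1 = (Real.sqrt γm : ℂ) • ((1/2 : ℂ) •
      ((!![0, 1; 1, 0] : Matrix (Fin 2) (Fin 2) ℂ)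
        - Complex.I • (!![0, -Complex.I; Complex.I, 0] : Matrix (Fin 2) (Fin 2) ℂ))))
    (hV2 : V 2 = (Real.sqrt γz : ℂ) • (!![1, 0; 0, -1] : Matrix (Fin 2) (Fin 2) ℂ))
    (α β : ℂ) :
    Jf V !![α, -star β; β, star α] 0 1
      = γp * (norm α ^ 2) ^ 2 + γm * (norm β ^ 2) ^ 2
        + 4 * γz * (norm α ^ 2 * norm β ^ 2)
    ∧ Jf V !![α, -star β; β, star α] 1 0
      = γp * (norm β ^ 2) ^ 2 + γm * (norm α ^ 2) ^ 2
        + 4 * γz * (norm α ^ 2 * norm β ^ 2) := by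
  rw [jf_formula γp γm γz hp hm hz V hV0 hV1 hV2,
      jf_formula γp γm γz hp hm hz V hV0 hV1 hV2]
  have e1 : norm (star (!![α, -star β; β, star α] 0 0) * !![α, -star β; β, star α] 1 1) ^ 2
      = (norm α ^ 2) ^ 2 := by
    simp [norm_mul]; ring
  constructor
  · have c1 : star (!![α, -star β; β, star α] 0 0) * !![α, -star β; β, star α] 0 1
        - star (!![α, -star β; β, star α] 1 0) * !![α, -star β; β, star α] 1 1
      = -2 * (star α * star β) := by
      simp; ring
    rw [c1]
    simp [norm_mul, mul_pow]
    ring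
  · have c2 : star (!![α, -star β; β, star α] 0 1) * !![α, -star β; β, star α] 0 0
        - star (!![α, -star β; β, star α] 1 1) * !![α, -star β; β, star α] 1 0
      = -2 * (α * β) := by
      simp; ring
    rw [c2]
    simp [norm_mul, mul_pow]
    ring


lemma su2_struct (U : Matrix (Fin 2) (Fin 2) ℂ)
    (hU : U ∈ Matrix.specialUnitaryGroup (Fin 2) ℂ) :
    U = !![U 0 0, -star (U 1 0); U 1 0, star (U 0 0)]
      ∧ norm (U 0 0) ^ 2 + norm (U 1 0) ^ 2 = 1 := by
  rw [Matrix.mem_specialUnitaryGroup_iff, Matrix.mem_unitaryGroup_iff'] at hU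
  obtain ⟨huni, hdet⟩ := hU
  have hadj : Uᴴ = U.adjugate := by
    have h2 : U * U.adjugate = 1 := by
      rw [Matrix.mul_adjugate, hdet, one_smul]
    calc Uᴴ = Uᴴ * (U * U.adjugate) := by rw [h2, mul_one]
    _ = (Uᴴ * U) * U.adjugate := by rw [mul_assoc]
    _ = U.adjugate := by
        have : star U * U = 1 := huni
        rw [show (star U : Matrix (Fin 2) (Fin 2) ℂ) = Uᴴ from rfl] at this
        rw [this, one_mul]
  rw [Matrix.adjugate_fin_two] at hadj
  have h00 : star (U 0 0) = U 1 1 := by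
    have := congrFun (congrFun hadj 0) 0
    simpa [conjTranspose_apply] using this
  have h01 : star (U 0 1) = -U 1 0 := by
    have := congrFun (congrFun hadj 1) 0
    simpa [conjTranspose_apply] using this
  have h01' : U 0 1 = -star (U 1 0) := by
    have := congrArg star h01
    simpa using this
  have hnorm : norm (U 0 0) ^ 2 + norm (U 1 0) ^ 2 = 1 := by
    have := congrFun (congrFun (huni : star U * U = 1) 0) 0
    simp [Matrix.mul_apply, Fin.sum_univ_two, Matrix.one_apply,
      show (star U : Matrix (Fin 2) (Fin 2) ℂ) = Uᴴ from rfl, conjTranspose_apply] at this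
    rw [mul_comm ((starRingEnd ℂ) (U 0 0)) _, mul_comm ((starRingEnd ℂ) (U 1 0)) _,
      Complex.mul_conj, Complex.mul_conj] at this
    rw [Complex.sq_norm, Complex.sq_norm]
    exact_mod_cast this
  refine ⟨?_, hnorm⟩
  ext i j
  fin_cases i <;> fin_cases j <;> simp [h01', ← h00]


lemma exp_sigma_x (θ : ℝ) :
    NormedSpace.exp ((Complex.I * θ) • (!![0, 1; 1, 0] : Matrix (Fin 2) (Fin 2) ℂ))
      = !![(Real.cos θ : ℂ), Complex.I * Real.sin θ;
           Complex.I * Real.sin θ, (Real.cos θ : ℂ)] := by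
  set z : ℂ := Complex.I * θ with hz
  have hPinv : (!![1, 1; 1, -1] : Matrix (Fin 2) (Fin 2) ℂ) * ((1/2 : ℂ) • !![1, 1; 1, -1]) = 1 := by
    ext i j; fin_cases i <;> fin_cases j <;>
      simp [Matrix.mul_apply, Fin.sum_univ_two, Matrix.one_apply] <;> ring
  have hPinv' : ((1/2 : ℂ) • !![1, 1; 1, -1] : Matrix (Fin 2) (Fin 2) ℂ) * !![1, 1; 1, -1] = 1 := by
    ext i j; fin_cases i <;> fin_cases j <;>
      simp [Matrix.mul_apply, Fin.sum_univ_two, Matrix.one_apply] <;> ring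
  set Pu : (Matrix (Fin 2) (Fin 2) ℂ)ˣ := ⟨!![1, 1; 1, -1], (1/2 : ℂ) • !![1, 1; 1, -1], hPinv, hPinv'⟩ with hPu
  have hdiag : ∀ w : ℂ, (Matrix.diagonal ![w, -w] : Matrix (Fin 2) (Fin 2) ℂ) = !![w, 0; 0, -w] := by
    intro w; ext i j; fin_cases i <;> fin_cases j <;> simp [Matrix.diagonal_apply]
  have hdiag2 : (Matrix.diagonal ![Complex.exp z, Complex.exp (-z)] : Matrix (Fin 2) (Fin 2) ℂ)
      = !![Complex.exp z, 0; 0, Complex.exp (-z)] := by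
    ext i j; fin_cases i <;> fin_cases j <;> simp [Matrix.diagonal_apply]
  have hconj : z • (!![0, 1; 1, 0] : Matrix (Fin 2) (Fin 2) ℂ)
      = (Pu : Matrix (Fin 2) (Fin 2) ℂ) * Matrix.diagonal ![z, -z] * ((Pu⁻¹ : (Matrix (Fin 2) (Fin 2) ℂ)ˣ) : Matrix (Fin 2) (Fin 2) ℂ) := by
    show z • (!![0, 1; 1, 0] : Matrix (Fin 2) (Fin 2) ℂ)
      = !![1, 1; 1, -1] * Matrix.diagonal ![z, -z] * ((1/2 : ℂ) • !![1, 1; 1, -1])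
    rw [hdiag]
    ext i j; fin_cases i <;> fin_cases j <;>
      simp [Matrix.mul_apply, Fin.sum_univ_two, Matrix.diagonal_apply, Matrix.vecHead, Matrix.vecTail] <;> ring
  rw [hconj, Matrix.exp_units_conj Pu, Matrix.exp_diagonal]
  have hexp : (NormedSpace.exp ![z, -z] : Fin 2 → ℂ) = ![Complex.exp z, Complex.exp (-z)] := by
    ext i
    fin_cases i <;> simp [← Complex.exp_eq_exp_ℂ, Pi.exp_def]
  rw [hexp]
  show (!![1, 1; 1, -1] : Matrix (Fin 2) (Fin 2) ℂ) * Matrix.diagonal ![Complex.exp z, Complex.exp (-z)]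
      * ((1/2 : ℂ) • !![1, 1; 1, -1]) = _
  rw [hdiag2]
  have he1 : Complex.exp z = Real.cos θ + Complex.I * Real.sin θ := by
    rw [hz, mul_comm, Complex.exp_mul_I]
    simp [Complex.ofReal_cos, Complex.ofReal_sin]
    ring
  have he2 : Complex.exp (-z) = Real.cos θ - Complex.I * Real.sin θ := by
    rw [hz, show -(Complex.I * (θ:ℂ)) = ((-θ : ℝ) : ℂ) * Complex.I by push_cast; ring,
      Complex.exp_mul_I]
    simp [Complex.cos_neg, Complex.sin_neg, Complex.ofReal_cos, Complex.ofReal_sin]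
    ring
  ext i j; fin_cases i <;> fin_cases j <;>
    simp [Matrix.mul_apply, Fin.sum_univ_two, Matrix.diagonal_apply, Matrix.vecHead, Matrix.vecTail, he1, he2] <;> ring

lemma su2_mem (t : ℝ) (ht0 : 0 ≤ t) (ht1 : t ≤ 1) :
    (!![(Real.sqrt t : ℂ), Complex.I * Real.sqrt (1 - t);
        Complex.I * Real.sqrt (1 - t), (Real.sqrt t : ℂ)] : Matrix (Fin 2) (Fin 2) ℂ)
      ∈ Matrix.specialUnitaryGroup (Fin 2) ℂ := by
  have hs : (0:ℝ) ≤ 1 - t := by linarith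
  have e1 : ((Real.sqrt t : ℂ)) * (Real.sqrt t : ℂ) = (t : ℂ) := by
    rw [← Complex.ofReal_mul, Real.mul_self_sqrt ht0]
  have e2 : ((Real.sqrt (1-t) : ℂ)) * (Real.sqrt (1-t) : ℂ) = 1 - (t : ℂ) := by
    rw [← Complex.ofReal_mul, Real.mul_self_sqrt hs]; push_cast; ring
  rw [Matrix.mem_specialUnitaryGroup_iff]
  constructor
  · rw [Matrix.mem_unitaryGroup_iff']
    have hH : (!![(Real.sqrt t : ℂ), Complex.I * Real.sqrt (1 - t);
        Complex.I * Real.sqrt (1 - t), (Real.sqrt t : ℂ)] : Matrix (Fin 2) (Fin 2) ℂ)ᴴ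
      = !![(Real.sqrt t : ℂ), -(Complex.I * Real.sqrt (1 - t));
        -(Complex.I * Real.sqrt (1 - t)), (Real.sqrt t : ℂ)] := by
      ext i j; fin_cases i <;> fin_cases j <;>
        simp [Matrix.conjTranspose_apply, Complex.conj_ofReal]
    show _ᴴ * _ = _
    rw [hH]
    ext i j
    fin_cases i <;> fin_cases j <;>
      simp only [Matrix.mul_apply, Fin.sum_univ_two, Matrix.cons_val', Matrix.cons_val_zero,
        Matrix.cons_val_one, Matrix.head_cons, Matrix.head_fin_const, Matrix.empty_val',
        Matrix.cons_val_fin_one, Matrix.of_apply, Matrix.one_apply, if_true, if_false,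
        Fin.zero_eta, Fin.mk_one, ne_eq, one_ne_zero, not_false_eq_true, zero_ne_one,
        Matrix.one_apply_eq, Matrix.one_apply_ne] 
    all_goals try ring
    all_goals linear_combination e1 + e2 + (-((Real.sqrt (1-t) : ℂ) * (Real.sqrt (1-t) : ℂ))) * Complex.I_mul_I
  · rw [Matrix.det_fin_two_of]
    linear_combination e1 + e2
      + (-((Real.sqrt (1-t) : ℂ) * (Real.sqrt (1-t) : ℂ))) * Complex.I_mul_I


set_option maxHeartbeats 1000000 in
theorem stmt_17 (γp γm γz : ℝ) (hpm : γm < γp) (hm : 0 ≤ γm) (hz : 0 ≤ γz)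
    (Δ Sig δ : ℝ) (hΔ : Δ = γp - γm) (hSig : Sig = γp + γm) (hδ : δ = 2 * γz - Sig / 2)
    (V : Fin 3 → Matrix (Fin 2) (Fin 2) ℂ)
    (hV0 : V 0 = (Real.sqrt γp : ℂ) • ((1/2 : ℂ) •
      ((!![0, 1; 1, 0] : Matrix (Fin 2) (Fin 2) ℂ)
        + Complex.I • (!![0, -Complex.I; Complex.I, 0] : Matrix (Fin 2) (Fin 2) ℂ))))
    (hV1 : V 1 = (Real.sqrt γm : ℂ) • ((1/2 : ℂ) •
      ((!![0, 1; 1, 0] : Matrix (Fin 2) (Fin 2) ℂ)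
        - Complex.I • (!![0, -Complex.I; Complex.I, 0] : Matrix (Fin 2) (Fin 2) ℂ))))
    (hV2 : V 2 = (Real.sqrt γz : ℂ) • (!![1, 0; 0, -1] : Matrix (Fin 2) (Fin 2) ℂ)) :
    Qset V = {p : ℝ × ℝ | ∃ a ∈ Set.Icc (-Δ) Δ,
      p = (a, Sig + δ * (1 - a ^ 2 / Δ ^ 2))} ∧
    (∀ x : ℝ,
      Jf V (NormedSpace.exp ((Complex.I * (Real.pi * x)) •
        (!![0, 1; 1, 0] : Matrix (Fin 2) (Fin 2) ℂ))) 0 1 -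
      Jf V (NormedSpace.exp ((Complex.I * (Real.pi * x)) •
        (!![0, 1; 1, 0] : Matrix (Fin 2) (Fin 2) ℂ))) 1 0
        = Δ * Real.cos (2 * Real.pi * x) ∧
      Jf V (NormedSpace.exp ((Complex.I * (Real.pi * x)) •
        (!![0, 1; 1, 0] : Matrix (Fin 2) (Fin 2) ℂ))) 0 1 +
      Jf V (NormedSpace.exp ((Complex.I * (Real.pi * x)) •
        (!![0, 1; 1, 0] : Matrix (Fin 2) (Fin 2) ℂ))) 1 0
        = Sig + δ * Real.sin (2 * Real.pi * x) ^ 2) := by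
  have hp : 0 ≤ γp := le_trans hm hpm.le
  have hΔpos : 0 < Δ := by rw [hΔ]; linarith
  have hΔne : Δ ≠ 0 := ne_of_gt hΔpos
  constructor
  · ext p
    simp only [Qset, Set.mem_setOf_eq]
    constructor
    · rintro ⟨U, hU, rfl⟩
      obtain ⟨hUeq, hnorm⟩ := su2_struct U hU
      obtain ⟨hJ1, hJ2⟩ := jf_su2 γp γm γz hp hm hz V hV0 hV1 hV2 (U 0 0) (U 1 0)
      rw [← hUeq] at hJ1 hJ2
      set t := norm (U 0 0) ^ 2 with hts
      set s := norm (U 1 0) ^ 2 with hss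
      have ht0 : 0 ≤ t := by positivity
      have hs0 : 0 ≤ s := by positivity
      have hs1 : s = 1 - t := by linarith
      rw [hs1] at hJ1 hJ2
      refine ⟨Δ * (2*t - 1), Set.mem_Icc.mpr ⟨?_, ?_⟩, ?_⟩
      · nlinarith
      · nlinarith
      · have hdiv : (Δ*(2*t-1))^2/Δ^2 = (2*t-1)^2 := by
          field_simp
        rw [Prod.ext_iff]
        constructor
        · show _ - _ = _
          rw [hJ1, hJ2, hΔ]; ring
        · show _ + _ = _
          rw [hJ1, hJ2, hdiv, hδ, hSig]; ring
    · rintro ⟨a, ha, rfl⟩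
      rw [Set.mem_Icc] at ha
      have hu1 : -1 ≤ a/Δ := by rw [le_div_iff₀ hΔpos]; linarith [ha.1]
      have hu2 : a/Δ ≤ 1 := by rw [div_le_one hΔpos]; linarith [ha.2]
      set t : ℝ := (1 + a/Δ)/2 with ht
      have ht0 : 0 ≤ t := by rw [ht]; linarith
      have ht1 : t ≤ 1 := by rw [ht]; linarith
      refine ⟨!![(Real.sqrt t : ℂ), Complex.I * Real.sqrt (1 - t);
        Complex.I * Real.sqrt (1 - t), (Real.sqrt t : ℂ)], su2_mem t ht0 ht1, ?_⟩
      obtain ⟨hJ1, hJ2⟩ := jf_su2 γp γm γz hp hm hz V hV0 hV1 hV2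
        ((Real.sqrt t : ℂ)) (Complex.I * Real.sqrt (1 - t))
      have hUeq : (!![(Real.sqrt t : ℂ), -star (Complex.I * (Real.sqrt (1-t) : ℂ));
          Complex.I * (Real.sqrt (1-t) : ℂ), star ((Real.sqrt t : ℂ))] : Matrix (Fin 2) (Fin 2) ℂ)
          = !![(Real.sqrt t : ℂ), Complex.I * Real.sqrt (1 - t);
            Complex.I * Real.sqrt (1 - t), (Real.sqrt t : ℂ)] := by
        ext i j; fin_cases i <;> fin_cases j <;>
          simp [Complex.conj_ofReal]
      rw [hUeq] at hJ1 hJ2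
      have hat : norm ((Real.sqrt t : ℝ) : ℂ) ^ 2 = t := by
        rw [Complex.norm_real, Real.norm_eq_abs, _root_.abs_of_nonneg (Real.sqrt_nonneg _), Real.sq_sqrt ht0]
      have hbt : norm (Complex.I * ((Real.sqrt (1-t) : ℝ) : ℂ)) ^ 2 = 1 - t := by
        rw [norm_mul, Complex.norm_I, one_mul, Complex.norm_real, Real.norm_eq_abs,
          _root_.abs_of_nonneg (Real.sqrt_nonneg _), Real.sq_sqrt (by linarith : (0:ℝ) ≤ 1 - t)]
      rw [hat, hbt] at hJ1 hJ2
      rw [Prod.ext_iff]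
      constructor
      · show _ = _ - _
        rw [hJ1, hJ2, ht, hΔ]
        have : γp - γm ≠ 0 := by intro h; apply hΔne; rw [hΔ, h]
        field_simp
        ring
      · show _ = _ + _
        rw [hJ1, hJ2, ht, hδ, hSig, hΔ]
        have : γp - γm ≠ 0 := by intro h; apply hΔne; rw [hΔ, h]
        field_simp
        ring
  · intro x
    have hM : ((Complex.I * (Real.pi * x)) : ℂ) = Complex.I * ((Real.pi * x : ℝ) : ℂ) := by
      push_cast; ring
    rw [hM, exp_sigma_x (Real.pi * x)]
    set θ := Real.pi * x with hθ
    set c := Real.cos θ with hc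
    set s := Real.sin θ with hsn
    obtain ⟨hJ1, hJ2⟩ := jf_su2 γp γm γz hp hm hz V hV0 hV1 hV2
      ((c : ℂ)) (Complex.I * (s : ℂ))
    have hUeq : (!![(c : ℂ), -star (Complex.I * (s : ℂ));
        Complex.I * (s : ℂ), star ((c : ℂ))] : Matrix (Fin 2) (Fin 2) ℂ)
        = !![(c : ℂ), Complex.I * (s : ℂ); Complex.I * (s : ℂ), (c : ℂ)] := by
      ext i j; fin_cases i <;> fin_cases j <;> simp [Complex.conj_ofReal]
    rw [hUeq] at hJ1 hJ2
    have hat : norm ((c : ℝ) : ℂ) ^ 2 = c ^ 2 := by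
      rw [Complex.norm_real, Real.norm_eq_abs, _root_.sq_abs]
    have hbt : norm (Complex.I * ((s : ℝ) : ℂ)) ^ 2 = s ^ 2 := by
      rw [norm_mul, Complex.norm_I, one_mul, Complex.norm_real, Real.norm_eq_abs, _root_.sq_abs]
    rw [hat, hbt] at hJ1 hJ2
    have pyth : s ^ 2 + c ^ 2 = 1 := Real.sin_sq_add_cos_sq θ
    have hcos : Real.cos (2 * Real.pi * x) = 2 * c ^ 2 - 1 := by
      rw [show 2 * Real.pi * x = 2 * θ by rw [hθ]; ring, Real.cos_two_mul]
    have hsin : Real.sin (2 * Real.pi * x) = 2 * s * c := by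
      rw [show 2 * Real.pi * x = 2 * θ by rw [hθ]; ring, Real.sin_two_mul]
    constructor
    · rw [hJ1, hJ2, hΔ, hcos]
      linear_combination (γp - γm) * (c^2 - s^2 - 1) * pyth
    · rw [hJ1, hJ2, hδ, hSig, hsin]
      linear_combination (γp + γm) * (c^2 + s^2 + 1) * pyth
end
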